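/- arXiv:1009.3280 — 11 statements merged into one kernel-verified Lean document; each statement's English description precedes it below -/
import Mathlib

section
/- If u ∈ GL_n(K) satisfies u·M_n(O)·u⁻¹ = M_n(O), then u = c·g for some scalar c ∈ K^× and some g ∈ GL_n(O) (a matrix with entries in O whose determinant is a unit of O); in particular det(u) ∈ O^×·(K^×)ⁿ, i.e., det(u) = w·cⁿ for some unit w of O and some c ∈ K^×. -/
open scoped Matrix

/-- `M_n(O)` viewed as a subset of `M_n(K)`: matrices all of whose entries are integral. -/
def MatO (O K : Type*) [CommRing O] [Field K] [Algebra O K] (n : ℕ) :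
    Set (Matrix (Fin n) (Fin n) K) :=
  {a | ∀ i j : Fin n, a i j ∈ (algebraMap O K).range}

/-- Any nonzero matrix over `K` can be written as `c • g` with `g` integral and having
an entry equal to `1`. -/
lemma exists_unit_smul_integral (O K : Type*) [CommRing O] [IsDomain O]
    [IsDiscreteValuationRing O] [Field K] [Algebra O K] [IsFractionRing O K]
    (n : ℕ) (M : Matrix (Fin n) (Fin n) K) (hM : M ≠ 0) :
    ∃ (c : Kˣ) (g : Matrix (Fin n) (Fin n) O) (i j : Fin n),
      g i j = 1 ∧ M = (c : K) • (g.map (algebraMap O K)) := by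
  classical
  obtain ⟨b, hb⟩ := IsLocalization.exist_integer_multiples_of_finite
    (nonZeroDivisors O) (fun p : Fin n × Fin n => M p.1 p.2)
  choose x hx using hb
  -- x : Fin n × Fin n → O with algebraMap (x p) = b • M p.1 p.2
  have hbK : (algebraMap O K) (b : O) ≠ 0 := by
    have := nonZeroDivisors.coe_ne_zero b
    simpa using fun h => this ((IsFractionRing.injective O K) (by simpa using h))
  have hxne : ∃ p : Fin n × Fin n, x p ≠ 0 := by
    by_contra h
    push_neg at h
    apply hM
    ext i j
    have := hx (i, j)
    rw [h (i, j)] at this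
    simp only [map_zero] at this
    have : (b : O) • M i j = 0 := this.symm
    rw [Algebra.smul_def] at this
    simpa using (mul_eq_zero.mp this).resolve_left hbK
  obtain ⟨p0, hp0⟩ := hxne
  -- pick entry of minimal additive valuation
  obtain ⟨q, -, hq⟩ := Finset.exists_min_image Finset.univ
    (fun p => IsDiscreteValuationRing.addVal O (x p)) ⟨p0, Finset.mem_univ _⟩
  have hdvd : ∀ p, x q ∣ x p := fun p =>
    IsDiscreteValuationRing.addVal_le_iff_dvd.mp (hq p (Finset.mem_univ _))
  have hq0 : x q ≠ 0 := by
    intro h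
    have := hq p0 (Finset.mem_univ _)
    rw [h, IsDiscreteValuationRing.addVal_zero, top_le_iff,
      IsDiscreteValuationRing.addVal_eq_top_iff] at this
    exact hp0 this
  choose y hy using hdvd
  have hyq : y q = 1 := by
    have := hy q
    nth_rewrite 1 [show x q = x q * 1 from (mul_one _).symm] at this
    exact (mul_left_cancel₀ hq0 this).symm
  have heK : (algebraMap O K) (x q) ≠ 0 := fun h =>
    hq0 ((IsFractionRing.injective O K) (by simpa using h))
  refine ⟨Units.mk0 ((algebraMap O K) (x q) / (algebraMap O K) (b : O))
      (div_ne_zero heK hbK), Matrix.of (fun i j => y (i, j)), q.1, q.2, by simpa using hyq, ?_⟩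
  ext i j
  have h1 := hx (i, j)
  rw [Algebra.smul_def] at h1
  have h2 : x (i, j) = x q * y (i, j) := hy (i, j)
  simp only [Matrix.smul_apply, Matrix.map_apply, Matrix.of_apply, Units.val_mk0, smul_eq_mul]
  field_simp
  rw [mul_comm, ← h1, h2, map_mul]

/-- If `u ∈ GL_n(K)` satisfies `u · M_n(O) · u⁻¹ = M_n(O)`, then `u = c • g` with
`c ∈ K^×` and `g ∈ GL_n(O)`; in particular `det u = w · cⁿ` with `w ∈ O^×`, `c ∈ K^×`. -/
theorem conj_stabilizer_matrix_ring (O K : Type*) [CommRing O] [IsDomain O]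
    [IsDiscreteValuationRing O] [Field K] [Algebra O K] [IsFractionRing O K]
    (n : ℕ) (hn : 1 ≤ n) (u : GL (Fin n) K)
    (hu : (fun a => (u : Matrix (Fin n) (Fin n) K) * a *
        ((↑u⁻¹ : Matrix (Fin n) (Fin n) K))) '' MatO O K n = MatO O K n) :
    (∃ (c : Kˣ) (g : Matrix (Fin n) (Fin n) K),
        (∀ i j : Fin n, g i j ∈ (algebraMap O K).range) ∧
        (∃ w : Oˣ, g.det = algebraMap O K w) ∧
        (u : Matrix (Fin n) (Fin n) K) = (c : K) • g) ∧
      ∃ (w : Oˣ) (c : Kˣ),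
        (u : Matrix (Fin n) (Fin n) K).det = algebraMap O K w * (c : K) ^ n := by
  classical
  have hK : Function.Injective (algebraMap O K) := IsFractionRing.injective O K
  have hne : Nonempty (Fin n) := ⟨⟨0, hn⟩⟩
  set U : Matrix (Fin n) (Fin n) K := (u : Matrix (Fin n) (Fin n) K) with hUdef
  set V : Matrix (Fin n) (Fin n) K := ((↑u⁻¹ : Matrix (Fin n) (Fin n) K)) with hVdef
  have hUV : U * V = 1 := u.mul_inv
  have hVU : V * U = 1 := u.inv_mul
  have hU0 : U ≠ 0 := by
    intro h
    rw [h, zero_mul] at hUV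
    have := congrFun (congrFun hUV ⟨0, hn⟩) ⟨0, hn⟩
    simp [Matrix.one_apply] at this
  have hV0 : V ≠ 0 := by
    intro h
    rw [h, zero_mul] at hVU
    have := congrFun (congrFun hVU ⟨0, hn⟩) ⟨0, hn⟩
    simp [Matrix.one_apply] at this
  obtain ⟨c, g', i0, j0, hg1, hgU⟩ := exists_unit_smul_integral O K n U hU0
  obtain ⟨c', h', k0, l0, hh1, hhV⟩ := exists_unit_smul_integral O K n V hV0
  set f := algebraMap O K
  set gm := g'.map f with hgm
  set hm := h'.map f with hhm
  have hcc0 : ((c : K) * (c' : K)) ≠ 0 := mul_ne_zero c.ne_zero c'.ne_zero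
  -- the product g' * h' is a scalar matrix
  have hprod : gm * hm = (((c : K) * (c' : K))⁻¹) • 1 := by
    have : ((c : K) * (c' : K)) • (gm * hm) = 1 := by
      rw [← hUV, hgU, hhV]
      rw [Matrix.smul_mul, Matrix.mul_smul, smul_smul]
    rw [← this, smul_smul, inv_mul_cancel₀ hcc0, one_smul]
  set i1 : Fin n := ⟨0, hn⟩
  set t : O := (g' * h') i1 i1 with htdef
  have hmapmul : gm * hm = (g' * h').map f := (Matrix.map_mul).symm
  have hft : f t = ((c : K) * (c' : K))⁻¹ := by
    have := congrFun (congrFun (hmapmul.symm.trans hprod) i1) i1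
    simpa [Matrix.map_apply, Matrix.one_apply] using this
  have hscalar : g' * h' = t • (1 : Matrix (Fin n) (Fin n) O) := by
    ext i j
    apply hK
    have := congrFun (congrFun (hmapmul.symm.trans hprod) i) j
    simp only [Matrix.map_apply] at this
    rw [this]
    rcases eq_or_ne i j with rfl | hij
    · simp [Matrix.one_apply, hft]
    · simp [Matrix.one_apply, hij]
  -- use the hypothesis to show t is a unit
  have hamem : (Matrix.single j0 k0 (1 : O)).map f ∈ MatO O K n := by
    intro i j
    exact ⟨Matrix.single j0 k0 (1 : O) i j, rfl⟩
  have hconj : U * ((Matrix.single j0 k0 (1 : O)).map f) * V ∈ MatO O K n := by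
    rw [← hu]
    exact ⟨_, hamem, rfl⟩
  have hentry : (g' * Matrix.single j0 k0 (1 : O) * h') i0 l0 = 1 := by
    rw [Matrix.mul_apply, Finset.sum_eq_single k0]
    · rw [Matrix.mul_single_apply_same, hg1, hh1, mul_one, mul_one]
    · intro b _ hb
      rw [Matrix.mul_single_apply_of_ne _ _ _ _ _ hb, zero_mul]
    · intro hb
      exact absurd (Finset.mem_univ k0) hb
  have hUaV : (U * ((Matrix.single j0 k0 (1 : O)).map f) * V) i0 l0
      = (c : K) * (c' : K) := by
    rw [hgU, hhV]
    rw [Matrix.smul_mul, Matrix.smul_mul, Matrix.mul_smul]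
    rw [← Matrix.map_mul, ← Matrix.map_mul]
    simp only [Matrix.smul_apply, Matrix.map_apply, hentry, map_one, smul_eq_mul]
    ring
  obtain ⟨s, hs⟩ := hconj i0 l0
  have hst : s * t = 1 := by
    apply hK
    rw [map_mul, map_one]
    show f s * f t = 1
    rw [hs, hUaV, hft, mul_inv_cancel₀ hcc0]
  have htunit : IsUnit t := IsUnit.of_mul_eq_one (a := t) s (by rw [mul_comm]; exact hst)
  -- determinant of g' is a unit
  have hdetmul : g'.det * h'.det = t ^ n := by
    have := congrArg Matrix.det hscalar
    rw [Matrix.det_mul, Matrix.det_smul, Matrix.det_one, Fintype.card_fin, mul_one] at this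
    exact this
  have hdetg : IsUnit g'.det :=
    isUnit_of_mul_isUnit_left (hdetmul ▸ htunit.pow n)
  have hdetgm : gm.det = f g'.det := by
    show (g'.map ⇑f).det = f g'.det
    rw [← RingHom.mapMatrix_apply, ← RingHom.map_det]
  refine ⟨⟨c, gm, fun i j => ⟨g' i j, rfl⟩, ⟨hdetg.unit, by rw [hdetgm, IsUnit.unit_spec]⟩,
    hgU⟩, hdetg.unit, c, ?_⟩
  rw [hgU, Matrix.det_smul, Fintype.card_fin, hdetgm, IsUnit.unit_spec, mul_comm]
end

section
/- Let L₁ and L₂ be finitely generated O-submodules of Kⁿ that span Kⁿ over K. Then End(L₁) = End(L₂) if and only if L₂ = c·L₁ for some c ∈ K^×. -/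
open scoped Matrix

/-- `End(L)`: the set of matrices in `M_n(K)` stabilizing the `O`-submodule `L` of `Kⁿ`
under matrix–vector multiplication. -/
def MatEnd (O K : Type*) [CommRing O] [Field K] [Algebra O K] (n : ℕ)
    (L : Submodule O (Fin n → K)) : Set (Matrix (Fin n) (Fin n) K) :=
  {g | ∀ x ∈ L, g.mulVec x ∈ L}

/-- Easy direction: `MatEnd` is invariant under scaling the lattice by a unit. -/
lemma matEnd_eq_of_image (O K : Type*) [CommRing O] [Field K] [Algebra O K] (n : ℕ)
    (L₁ L₂ : Submodule O (Fin n → K)) (c : Kˣ)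
    (h : (L₂ : Set (Fin n → K)) = (fun x => (c : K) • x) '' (L₁ : Set (Fin n → K))) :
    MatEnd O K n L₁ = MatEnd O K n L₂ := by
  have hmem : ∀ x : Fin n → K, x ∈ L₂ ↔ ∃ y ∈ L₁, (c : K) • y = x := by
    intro x
    rw [← SetLike.mem_coe, h]
    simp [Set.mem_image]
  ext g
  simp only [MatEnd, Set.mem_setOf_eq]
  constructor
  · intro hg x hx
    obtain ⟨y, hy, rfl⟩ := (hmem x).mp hx
    rw [Matrix.mulVec_smul]
    exact (hmem _).mpr ⟨g.mulVec y, hg y hy, rfl⟩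
  · intro hg x hx
    have h2 : (c : K) • x ∈ L₂ := (hmem _).mpr ⟨x, hx, rfl⟩
    have h3 := hg _ h2
    rw [Matrix.mulVec_smul] at h3
    obtain ⟨y, hy, hxy⟩ := (hmem _).mp h3
    have : y = g.mulVec x := smul_right_injective _ c.ne_zero hxy
    exact this ▸ hy

/-- The `O`-span of the coercion of a basis of a submodule recovers the submodule. -/
lemma span_range_coe_basis {O M : Type*} [CommRing O] [AddCommGroup M] [Module O M]
    (L : Submodule O M) {ι : Type*} (w : Module.Basis ι O ↥L) :
    Submodule.span O (Set.range fun i => ((w i : M))) = L := by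
  have h : (Set.range fun i => ((w i : M))) = L.subtype '' Set.range w := by
    ext x
    simp [Set.range_comp, Set.mem_image]
  rw [h, ← Submodule.map_span, w.span_eq, Submodule.map_top, Submodule.range_subtype]

section Helpers

variable (O K : Type*) [CommRing O] [IsDomain O] [Field K] [Algebra O K] [IsFractionRing O K]
variable (n : ℕ)

/-- Coercing an `O`-basis of a `K`-spanning lattice gives a `K`-linearly independent
spanning family. -/
lemma basis_coe_li_span (L : Submodule O (Fin n → K))
    (hspan : Submodule.span K (L : Set (Fin n → K)) = ⊤)
    {ι : Type*} (w : Module.Basis ι O ↥L) :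
    LinearIndependent K (fun i => (w i : Fin n → K)) ∧
      Submodule.span K (Set.range fun i => (w i : Fin n → K)) = ⊤ := by
  have hliO : LinearIndependent O (fun i => (w i : Fin n → K)) :=
    w.linearIndependent.map' L.subtype (Submodule.ker_subtype L)
  refine ⟨(LinearIndependent.iff_fractionRing O K).mp hliO, ?_⟩
  refine top_unique ?_
  rw [← hspan]
  rw [Submodule.span_le]
  intro x hx
  have hx' : x ∈ Submodule.span O (Set.range fun i => (w i : Fin n → K)) := by
    rw [span_range_coe_basis]; exact hx
  exact Submodule.span_le_restrictScalars O K _ hx'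

/-- The cardinality of an `O`-basis of a `K`-spanning lattice in `Kⁿ` is `n`. -/
lemma card_basis_eq (L : Submodule O (Fin n → K))
    (hspan : Submodule.span K (L : Set (Fin n → K)) = ⊤)
    {ι : Type*} [Fintype ι] (w : Module.Basis ι O ↥L) :
    Fintype.card ι = n := by
  obtain ⟨hli, hsp⟩ := basis_coe_li_span O K n L hspan w
  let bK : Module.Basis ι K (Fin n → K) := Module.Basis.mk hli (by rw [hsp])
  have h1 : Module.finrank K (Fin n → K) = Fintype.card ι :=
    Module.finrank_eq_card_basis bK
  rw [Module.finrank_pi] at h1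
  simp at h1
  omega

end Helpers

/-- Core of the hard direction, assuming `L₂ ≤ L₁`. -/
lemma matEnd_main (O K : Type*) [CommRing O] [IsDomain O]
    [IsDiscreteValuationRing O] [Field K] [Algebra O K] [IsFractionRing O K]
    (n : ℕ) (hn : 1 ≤ n) (L₁ L₂ : Submodule O (Fin n → K))
    (hL₁fg : L₁.FG) (hle : L₂ ≤ L₁)
    (hL₁span : Submodule.span K (L₁ : Set (Fin n → K)) = ⊤)
    (hL₂span : Submodule.span K (L₂ : Set (Fin n → K)) = ⊤)
    (hEnd : MatEnd O K n L₁ = MatEnd O K n L₂) :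
    ∃ c : Kˣ, (L₂ : Set (Fin n → K)) = (fun x => (c : K) • x) '' (L₁ : Set (Fin n → K)) := by
  classical
  haveI : NoZeroSMulDivisors O (Fin n → K) := by
    refine ⟨fun {a x} h => ?_⟩
    rcases eq_or_ne a 0 with rfl | ha
    · exact Or.inl rfl
    · refine Or.inr ?_
      have h' : (algebraMap O K a) • x = 0 := by rwa [algebraMap_smul]
      have ha' : algebraMap O K a ≠ 0 :=
        (map_ne_zero_iff _ (IsFractionRing.injective O K)).mpr ha
      exact (smul_eq_zero.mp h').resolve_left ha'
  haveI : Module.Finite O ↥L₁ := Module.Finite.iff_fg.mpr hL₁fg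
  haveI : Module.Free O ↥L₁ := Module.free_of_finite_type_torsion_free'
  let b : Module.Basis (Module.Free.ChooseBasisIndex O ↥L₁) O ↥L₁ := Module.Free.chooseBasis O ↥L₁
  have hcard : Fintype.card (Module.Free.ChooseBasisIndex O ↥L₁) = n :=
    card_basis_eq O K n L₁ hL₁span b
  -- Smith normal form for N := L₂ viewed inside L₁
  obtain ⟨m, snf⟩ := (L₂.comap L₁.subtype).smithNormalForm b
  set ι := Module.Free.ChooseBasisIndex O ↥L₁
  set N : Submodule O ↥L₁ := L₂.comap L₁.subtype with hN
  -- the coerced basis of L₁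
  set v : ι → (Fin n → K) := fun i => ((snf.bM i : ↥L₁) : Fin n → K) with hv
  obtain ⟨hliK, hspv⟩ := basis_coe_li_span O K n L₁ hL₁span snf.bM
  let bK : Module.Basis ι K (Fin n → K) := Module.Basis.mk hliK (by rw [hspv])
  have hbK : ∀ i, bK i = v i := fun i => Module.Basis.mk_apply hliK _ i
  haveI : Nonempty ι := by
    have h0 : Fintype.card ι = n := hcard
    exact Fintype.card_pos_iff.mp (by omega)
  -- m = n
  have hmn : m = n := by
    have h := card_basis_eq O K n L₂ hL₂span
      (snf.bN.map (Submodule.comapSubtypeEquivOfLe hle))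
    simpa using h
  -- f is surjective
  have hfsurj : Function.Surjective snf.f := by
    have hcards : Fintype.card (Fin m) = Fintype.card ι := by simp [hmn]; exact hcard.symm
    exact ((Fintype.bijective_iff_injective_and_card snf.f).mpr
      ⟨snf.f.injective, hcards⟩).2
  -- a i ≠ 0
  have ha_ne : ∀ i, snf.a i ≠ 0 := by
    intro i h0
    have hz := snf.snf i
    rw [h0, zero_smul] at hz
    exact snf.bN.ne_zero i (Subtype.coe_injective hz)
  -- coercion of bN vectors
  have hcoe : ∀ t : Fin m, ((snf.bN t : ↥L₁) : Fin n → K) = snf.a t • v (snf.f t) := by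
    intro t
    rw [snf.snf t, Submodule.coe_smul_of_tower]
  -- membership of bN vectors in L₂
  have hmemN : ∀ t : Fin m, ((snf.bN t : ↥L₁) : Fin n → K) ∈ L₂ := fun t => (snf.bN t).property
  -- L₁ as a span
  have h1 : Submodule.span O (Set.range v) = L₁ := span_range_coe_basis L₁ snf.bM
  -- L₂ as a span
  have h2 : Submodule.span O (Set.range fun t : Fin m => ((snf.bN t : ↥L₁) : Fin n → K)) = L₂ := by
    have e1 : Submodule.map L₁.subtype N = L₂ := by
      rw [hN, Submodule.map_comap_subtype, inf_eq_right.mpr hle]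
    have e2 : Submodule.span O (Set.range fun t : Fin m => (snf.bN t : ↥L₁)) = N :=
      span_range_coe_basis N snf.bN
    calc Submodule.span O (Set.range fun t : Fin m => ((snf.bN t : ↥L₁) : Fin n → K))
        = Submodule.map L₁.subtype
            (Submodule.span O (Set.range fun t : Fin m => (snf.bN t : ↥L₁))) := by
          rw [Submodule.map_span]
          congr 1
          ext x
          simp [Set.range_comp, Set.mem_image]
      _ = L₂ := by rw [e2, e1]
  -- key divisibility
  have hdvd : ∀ i j : Fin m, snf.a i ∣ snf.a j := by
    intro i j
    -- the elementary matrix sending `v (f j)` to `v (f i)` and killing other basis vectors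
    set u : ι → (Fin n → K) := fun k => if k = snf.f j then v (snf.f i) else 0 with hu
    set φ : (Fin n → K) →ₗ[K] (Fin n → K) := bK.constr ℕ u with hφ
    have hφv : ∀ k, φ (v k) = u k := by
      intro k
      rw [← hbK]
      exact bK.constr_basis ℕ u k
    set g : Matrix (Fin n) (Fin n) K := LinearMap.toMatrix' φ with hg
    have hgx : ∀ x, g.mulVec x = φ x := by
      intro x
      rw [← Matrix.toLin'_apply, hg, Matrix.toLin'_toMatrix']
    have hg1 : g ∈ MatEnd O K n L₁ := by
      intro x hx
      rw [hgx]
      have hmap : Submodule.map (φ.restrictScalars O) L₁ ≤ L₁ := by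
        conv_lhs => rw [← h1]
        rw [Submodule.map_span, Submodule.span_le]
        rintro _ ⟨_, ⟨k, rfl⟩, rfl⟩
        show φ (v k) ∈ (L₁ : Set (Fin n → K))
        rw [hφv, hu]
        by_cases hk : k = snf.f j <;> simp [hk, hv, SetLike.coe_mem]
      exact hmap (Submodule.mem_map_of_mem hx)
    have hg2 : g ∈ MatEnd O K n L₂ := hEnd ▸ hg1
    -- apply to the j-th basis vector of L₂
    have hcomp : g.mulVec ((snf.bN j : ↥L₁) : Fin n → K) = snf.a j • v (snf.f i) := by
      rw [hgx, hcoe j, LinearMap.map_smul_of_tower, hφv]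
      simp [hu]
    have hmem : snf.a j • v (snf.f i) ∈ L₂ := by
      rw [← hcomp]; exact hg2 _ (hmemN j)
    -- transfer to N and use coordinates
    have hw : (snf.a j • snf.bM (snf.f i) : ↥L₁) ∈ N := by
      show ((snf.a j • snf.bM (snf.f i) : ↥L₁) : Fin n → K) ∈ L₂
      rw [Submodule.coe_smul_of_tower]
      exact hmem
    have hr := congrFun (snf.repr_comp_embedding_eq_smul (⟨_, hw⟩ : ↥N)) i
    simp only [Function.comp_apply, Pi.smul_apply, smul_eq_mul] at hr
    have hval : snf.bM.repr ((⟨_, hw⟩ : ↥N) : ↥L₁) (snf.f i) = snf.a j := by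
      show snf.bM.repr (snf.a j • snf.bM (snf.f i)) (snf.f i) = snf.a j
      rw [map_smul, Finsupp.smul_apply, Module.Basis.repr_self, smul_eq_mul,
        Finsupp.single_eq_same, mul_one]
    exact ⟨_, hval ▸ hr⟩
  -- all a i are associated to a fixed one
  have hm1 : 0 < m := by omega
  let i₀ : Fin m := ⟨0, hm1⟩
  set c₀ : O := snf.a i₀ with hc₀
  have hc₀ne : c₀ ≠ 0 := ha_ne i₀
  have hcK : (algebraMap O K c₀) ≠ 0 :=
    (map_ne_zero_iff _ (IsFractionRing.injective O K)).mpr hc₀ne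
  refine ⟨Units.mk0 _ hcK, ?_⟩
  -- L₂ = c₀ • L₁ via the O-linear scaling map
  set σ : (Fin n → K) →ₗ[O] (Fin n → K) :=
    (LinearMap.lsmul K (Fin n → K) (algebraMap O K c₀)).restrictScalars O with hσ
  have hσx : ∀ x, σ x = (algebraMap O K c₀) • x := fun x => rfl
  have hmain : L₂ = Submodule.map σ L₁ := by
    apply le_antisymm
    · conv_lhs => rw [← h2]
      rw [Submodule.span_le]
      rintro _ ⟨t, rfl⟩
      obtain ⟨e, he⟩ : c₀ ∣ snf.a t := hdvd i₀ t
      have hkey : ((snf.bN t : ↥L₁) : Fin n → K) = σ (e • v (snf.f t)) := by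
        rw [hcoe t, hσx, he, mul_smul, ← algebraMap_smul K c₀ (e • v (snf.f t))]
      show ((snf.bN t : ↥L₁) : Fin n → K) ∈ (Submodule.map σ L₁ : Set (Fin n → K))
      rw [hkey]
      exact Submodule.mem_map_of_mem (L₁.smul_mem e (by simp [hv, SetLike.coe_mem]))
    · rw [Submodule.map_le_iff_le_comap]
      conv_lhs => rw [← h1]
      rw [Submodule.span_le]
      rintro _ ⟨k, rfl⟩
      obtain ⟨t, rfl⟩ := hfsurj k
      obtain ⟨s, hs⟩ : snf.a t ∣ c₀ := hdvd t i₀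
      show σ (v (snf.f t)) ∈ L₂
      rw [hσx, hs]
      have hswap : (algebraMap O K (snf.a t * s)) • v (snf.f t)
          = s • (snf.a t • v (snf.f t)) := by
        rw [map_mul, mul_comm, mul_smul, algebraMap_smul, algebraMap_smul]
      rw [hswap]
      exact L₂.smul_mem s (by rw [← hcoe t]; exact hmemN t)
  rw [hmain, Submodule.map_coe]
  rfl

/-- For finitely generated `O`-lattices `L₁`, `L₂` spanning `Kⁿ`,
`End(L₁) = End(L₂)` if and only if `L₂ = c • L₁` for some `c ∈ K^×`. -/
theorem matEnd_eq_iff_smul (O K : Type*) [CommRing O] [IsDomain O]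
    [IsDiscreteValuationRing O] [Field K] [Algebra O K] [IsFractionRing O K]
    (n : ℕ) (hn : 1 ≤ n) (L₁ L₂ : Submodule O (Fin n → K))
    (hL₁fg : L₁.FG) (hL₂fg : L₂.FG)
    (hL₁span : Submodule.span K (L₁ : Set (Fin n → K)) = ⊤)
    (hL₂span : Submodule.span K (L₂ : Set (Fin n → K)) = ⊤) :
    MatEnd O K n L₁ = MatEnd O K n L₂ ↔
      ∃ c : Kˣ, (L₂ : Set (Fin n → K)) = (fun x => (c : K) • x) '' (L₁ : Set (Fin n → K)) := by
  classical
  constructor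
  · intro hEnd
    -- every vector can be scaled into L₁
    have key : ∀ y : Fin n → K, ∃ d : O, d ≠ 0 ∧ (algebraMap O K d) • y ∈ L₁ := by
      intro y
      have hy : y ∈ Submodule.span K (L₁ : Set (Fin n → K)) := by rw [hL₁span]; trivial
      refine Submodule.span_induction (p := fun y _ => ∃ d : O, d ≠ 0 ∧ (algebraMap O K d) • y ∈ L₁)
        ?_ ?_ ?_ ?_ hy
      · intro x hx
        exact ⟨1, one_ne_zero, by simpa using L₁.smul_mem 1 hx⟩
      · exact ⟨1, one_ne_zero, by simp⟩
      · rintro x y' _ _ ⟨d₁, hd₁, hx₁⟩ ⟨d₂, hd₂, hy₂⟩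
        refine ⟨d₁ * d₂, mul_ne_zero hd₁ hd₂, ?_⟩
        rw [smul_add]
        refine L₁.add_mem ?_ ?_
        · have : (algebraMap O K (d₁ * d₂)) • x = d₂ • ((algebraMap O K d₁) • x) := by
            rw [map_mul, mul_comm, mul_smul, algebraMap_smul]
          rw [this]; exact L₁.smul_mem d₂ hx₁
        · have : (algebraMap O K (d₁ * d₂)) • y' = d₁ • ((algebraMap O K d₂) • y') := by
            rw [map_mul, mul_smul, algebraMap_smul]
          rw [this]; exact L₁.smul_mem d₁ hy₂
      · rintro k x _ ⟨d, hd, hx⟩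
        obtain ⟨r, s, hs, rfl⟩ := IsFractionRing.div_surjective (A := O) k
        have hs0 : s ≠ 0 := nonZeroDivisors.ne_zero hs
        have hsK : algebraMap O K s ≠ 0 :=
          (map_ne_zero_iff _ (IsFractionRing.injective O K)).mpr hs0
        refine ⟨s * d, mul_ne_zero hs0 hd, ?_⟩
        have : (algebraMap O K (s * d)) • (algebraMap O K r / algebraMap O K s) • x
            = r • ((algebraMap O K d) • x) := by
          rw [map_mul, smul_smul, div_eq_mul_inv]
          rw [show algebraMap O K s * algebraMap O K d * (algebraMap O K r * (algebraMap O K s)⁻¹)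
            = (algebraMap O K s * (algebraMap O K s)⁻¹) * (algebraMap O K r * algebraMap O K d)
            from by ring, mul_inv_cancel₀ hsK, one_mul, mul_smul, algebraMap_smul]
        rw [this]
        exact L₁.smul_mem r hx
    -- scale L₂ into L₁
    obtain ⟨S, hS⟩ := hL₂fg
    choose d hd hdm using key
    set a0 : O := ∏ y ∈ S, d y with ha0
    have ha0ne : a0 ≠ 0 := Finset.prod_ne_zero_iff.mpr fun y _ => hd y
    have ha0K : algebraMap O K a0 ≠ 0 :=
      (map_ne_zero_iff _ (IsFractionRing.injective O K)).mpr ha0ne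
    set cu : Kˣ := Units.mk0 _ ha0K with hcu
    set σ : (Fin n → K) →ₗ[O] (Fin n → K) :=
      (LinearMap.lsmul K (Fin n → K) (algebraMap O K a0)).restrictScalars O with hσ
    have hσx : ∀ x, σ x = (algebraMap O K a0) • x := fun _ => rfl
    set L₂' : Submodule O (Fin n → K) := Submodule.map σ L₂ with hL₂'
    have hL₂'coe : (L₂' : Set (Fin n → K)) = (fun x => (cu : K) • x) '' (L₂ : Set (Fin n → K)) := by
      rw [hL₂', Submodule.map_coe]; rfl
    have hle : L₂' ≤ L₁ := by
      rw [hL₂', Submodule.map_le_iff_le_comap, ← hS, Submodule.span_le]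
      intro y hy
      show σ y ∈ L₁
      rw [hσx]
      obtain ⟨e, he⟩ : d y ∣ a0 := Finset.dvd_prod_of_mem d hy
      have : (algebraMap O K a0) • y = e • ((algebraMap O K (d y)) • y) := by
        rw [he, map_mul, mul_comm, mul_smul, algebraMap_smul]
      rw [this]
      exact L₁.smul_mem e (hdm y)
    have hEnd' : MatEnd O K n L₁ = MatEnd O K n L₂' :=
      hEnd.trans (matEnd_eq_of_image O K n L₂ L₂' cu hL₂'coe)
    have hL₂'span : Submodule.span K (L₂' : Set (Fin n → K)) = ⊤ := by
      refine top_unique ?_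
      rw [← hL₂span, Submodule.span_le]
      intro x hx
      have h1 : (cu : K) • x ∈ L₂' := by
        rw [← SetLike.mem_coe, hL₂'coe]
        exact ⟨x, hx, rfl⟩
      have h2 : ((cu : K) • x) ∈ Submodule.span K (L₂' : Set (Fin n → K)) :=
        Submodule.subset_span h1
      have h3 := Submodule.smul_mem _ ((cu⁻¹ : Kˣ) : K) h2
      rwa [smul_smul, Units.inv_mul, one_smul] at h3
    obtain ⟨c, hc⟩ := matEnd_main O K n hn L₁ L₂' hL₁fg hle hL₁span hL₂'span hEnd'
    refine ⟨cu⁻¹ * c, ?_⟩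
    have himg := congrArg (fun s => (fun x => ((cu⁻¹ : Kˣ) : K) • x) '' s) (hL₂'coe.symm.trans hc)
    simp only [Set.image_image] at himg
    have hid : (fun x => ((cu⁻¹ : Kˣ) : K) • (cu : K) • x) = fun x : Fin n → K => x := by
      funext x
      rw [smul_smul, Units.inv_mul, one_smul]
    rw [hid] at himg
    rw [show (fun x : Fin n → K => x) '' (L₂ : Set (Fin n → K)) = (L₂ : Set (Fin n → K))
      from Set.image_id _] at himg
    rw [himg]
    congr 1
    funext x
    simp [Units.val_mul, mul_smul]
  · rintro ⟨c, hc⟩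
    exact matEnd_eq_of_image O K n L₁ L₂ c hc
end

section
/- If u ∈ Spin(Q) satisfies u·ι(v)·u⁻¹ = ι(v) for every v ∈ V, then u = 1 or u = −1. -/
open CliffordAlgebra

namespace SpinCentralAux

variable {F V : Type*} [Field F] [AddCommGroup V] [Module F V] {Q : QuadraticForm F V}

/-- Graded Leibniz rule for the left contraction. -/
theorem contract_mul (d : Module.Dual F V) (x y : CliffordAlgebra Q) :
    contractLeft (Q := Q) d (x * y) =
      contractLeft d x * y + involute x * contractLeft d y := by
  induction x using CliffordAlgebra.induction generalizing y with
  | algebraMap r =>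
      simp [contractLeft_algebraMap_mul, contractLeft_algebraMap, Algebra.smul_def]
  | ι m =>
      rw [contractLeft_ι_mul, contractLeft_ι, involute_ι, Algebra.smul_def, neg_mul,
        sub_eq_add_neg]
  | add a b ha hb =>
      simp only [map_add, add_mul, ha, hb]
      abel
  | mul a b ha hb =>
      rw [mul_assoc, ha, hb, ha b, map_mul]
      simp only [mul_add, add_mul, mul_assoc]
      abel

/-- The key identity : `ι v * x - involute x * ι v` is the contraction of `x` with
`polar Q v ·`. -/
theorem iota_mul_sub (v : V) (x : CliffordAlgebra Q) :
    ι Q v * x - involute x * ι Q v = contractLeft (Q.polarBilin v) x := by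
  induction x using CliffordAlgebra.induction with
  | algebraMap r =>
      rw [contractLeft_algebraMap, AlgHom.commutes, Algebra.commutes, sub_self]
  | ι m =>
      rw [contractLeft_ι, involute_ι, neg_mul, sub_neg_eq_add, ι_mul_ι_add_swap,
        QuadraticMap.polarBilin_apply_apply]
  | add a b ha hb =>
      simp only [map_add, mul_add, add_mul, ← ha, ← hb]
      abel
  | mul a b ha hb =>
      rw [contract_mul, ← ha, ← hb, map_mul]
      simp only [sub_mul, mul_sub, mul_assoc]
      abel

/-- Elements of the subalgebra generated by vectors orthogonal to `v` anticommute with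
`ι v` in a twisted sense. -/
theorem mul_iota_of_ortho (v : V) (S : Set V)
    (hS : ∀ w ∈ S, QuadraticMap.polar Q w v = 0)
    {x : CliffordAlgebra Q} (hx : x ∈ Algebra.adjoin F (ι Q '' S)) :
    x * ι Q v = ι Q v * involute x := by
  induction hx using Algebra.adjoin_induction with
  | mem y hy =>
      obtain ⟨w, hw, rfl⟩ := hy
      rw [ι_mul_ι_comm, hS w hw, map_zero, zero_sub, involute_ι, mul_neg]
  | algebraMap r => rw [Algebra.commutes, AlgHom.commutes]
  | add a b _ _ ha hb => rw [add_mul, ha, hb, map_add, mul_add]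
  | mul a b _ _ ha hb => rw [mul_assoc, hb, ← mul_assoc, ha, mul_assoc, map_mul]

theorem involute_mem_adjoin {S : Set V} {x : CliffordAlgebra Q}
    (hx : x ∈ Algebra.adjoin F (ι Q '' S)) :
    involute x ∈ Algebra.adjoin F (ι Q '' S) := by
  induction hx using Algebra.adjoin_induction with
  | mem y hy =>
      obtain ⟨w, hw, rfl⟩ := hy
      rw [involute_ι]
      exact neg_mem (Algebra.subset_adjoin ⟨w, hw, rfl⟩)
  | algebraMap r => rw [AlgHom.commutes]; exact algebraMap_mem _ r
  | add a b _ _ ha hb => rw [map_add]; exact add_mem ha hb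
  | mul a b _ _ ha hb => rw [map_mul]; exact mul_mem ha hb

/-- The basic projection operator attached to an anisotropic vector. -/
noncomputable def Eop (v : V) (x : CliffordAlgebra Q) : CliffordAlgebra Q :=
  (2 * Q v)⁻¹ • contractLeft (Q.polarBilin v) (ι Q v * x)

theorem Eop_add (v : V) (x y : CliffordAlgebra Q) :
    Eop v (x + y) = Eop v x + Eop v y := by
  simp only [Eop, mul_add, map_add, smul_add]

theorem polarBilin_self (v : V) : Q.polarBilin v v = 2 * Q v := by
  rw [QuadraticMap.polarBilin_apply_apply, QuadraticMap.polar_self, two_smul, two_mul]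

theorem Eop_one (h2 : (2 : F) ≠ 0) {v : V} (hv : Q v ≠ 0) :
    Eop (Q := Q) v 1 = 1 := by
  rw [Eop, mul_one, contractLeft_ι, polarBilin_self, Algebra.smul_def, ← map_mul,
    inv_mul_cancel₀ (mul_ne_zero h2 hv), map_one]

theorem Eop_fix (h2 : (2 : F) ≠ 0) {v : V} (hv : Q v ≠ 0) {x : CliffordAlgebra Q}
    (hx : contractLeft (Q.polarBilin v) x = 0) : Eop v x = x := by
  rw [Eop, contractLeft_ι_mul, hx, mul_zero, sub_zero, polarBilin_self, smul_smul,
    inv_mul_cancel₀ (mul_ne_zero h2 hv), one_smul]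

theorem Eop_mul_comm (v : V) (S : Set V)
    (hS : ∀ w ∈ S, QuadraticMap.polar Q v w = 0)
    {x : CliffordAlgebra Q} (hx : x ∈ Algebra.adjoin F (ι Q '' S))
    (z : CliffordAlgebra Q) :
    Eop v (x * z) = x * Eop v z := by
  induction hx using Algebra.adjoin_induction generalizing z with
  | mem y hy =>
      obtain ⟨w, hw, rfl⟩ := hy
      have h1 : ι Q v * (ι Q w * z) = -(ι Q w * (ι Q v * z)) := by
        rw [← mul_assoc, ι_mul_ι_comm, hS w hw, map_zero, zero_sub, neg_mul, mul_assoc]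
      simp only [Eop]
      rw [h1, map_neg, contractLeft_ι_mul, QuadraticMap.polarBilin_apply_apply,
        hS w hw, zero_smul, zero_sub, neg_neg, ← mul_smul_comm]
  | algebraMap r =>
      have h1 : (algebraMap F (CliffordAlgebra Q) r) * z = r • z := (Algebra.smul_def r z).symm
      simp only [Eop]
      rw [h1, mul_smul_comm, map_smul, smul_comm, Algebra.smul_def]
  | add a b _ _ ha hb => rw [add_mul, Eop_add, ha, hb, add_mul]
  | mul a b _ _ ha hb => rw [mul_assoc, ha, hb, mul_assoc]

theorem Eop_iota_mul (v : V) (S : Set V)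
    (hS : ∀ w ∈ S, QuadraticMap.polar Q v w = 0)
    {q : CliffordAlgebra Q} (hq : q ∈ Algebra.adjoin F (ι Q '' S)) :
    Eop v (ι Q v * q) = 0 := by
  have hS' : ∀ w ∈ S, QuadraticMap.polar Q w v = 0 := fun w hw => by
    rw [QuadraticMap.polar_comm]; exact hS w hw
  have h1 : ι Q v * q = involute q * ι Q v := by
    have := mul_iota_of_ortho v S hS' (involute_mem_adjoin hq)
    rwa [involute_involute, eq_comm] at this
  have h2 : Eop (Q := Q) v (ι Q v) = 0 := by
    rw [Eop, ι_sq_scalar, contractLeft_algebraMap, smul_zero]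
  rw [h1, Eop_mul_comm v S hS (involute_mem_adjoin hq), h2, mul_zero]

theorem decomp (v : V) (S : Set V)
    (hS : ∀ w ∈ S, QuadraticMap.polar Q w v = 0)
    {x : CliffordAlgebra Q} (hx : x ∈ Algebra.adjoin F (ι Q '' insert v S)) :
    ∃ p q, p ∈ Algebra.adjoin F (ι Q '' S) ∧ q ∈ Algebra.adjoin F (ι Q '' S) ∧
      x = p + ι Q v * q := by
  induction hx using Algebra.adjoin_induction with
  | mem y hy =>
      obtain ⟨w, hw, rfl⟩ := hy
      rcases hw with rfl | hw
      · exact ⟨0, 1, Subalgebra.zero_mem _, Subalgebra.one_mem _, by rw [zero_add, mul_one]⟩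
      · exact ⟨ι Q w, 0, Algebra.subset_adjoin ⟨w, hw, rfl⟩, Subalgebra.zero_mem _, by
          rw [mul_zero, add_zero]⟩
  | algebraMap r =>
      exact ⟨algebraMap F _ r, 0, algebraMap_mem _ r, Subalgebra.zero_mem _, by
        rw [mul_zero, add_zero]⟩
  | add a b _ _ ha hb =>
      obtain ⟨p, q, hp, hq, rfl⟩ := ha
      obtain ⟨p', q', hp', hq', rfl⟩ := hb
      exact ⟨p + p', q + q', add_mem hp hp', add_mem hq hq', by rw [mul_add]; abel⟩
  | mul a b _ _ ha hb =>
      obtain ⟨p, q, hp, hq, rfl⟩ := ha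
      obtain ⟨p', q', hp', hq', rfl⟩ := hb
      refine ⟨p * p' + Q v • (involute q * q'), involute p * q' + q * p',
        add_mem (mul_mem hp hp')
          (Subalgebra.smul_mem _ (mul_mem (involute_mem_adjoin hq) hq') _),
        add_mem (mul_mem (involute_mem_adjoin hp) hq') (mul_mem hq hp'), ?_⟩
      have e2 : p * (ι Q v * q') = ι Q v * (involute p * q') := by
        rw [← mul_assoc, mul_iota_of_ortho v S hS hp, mul_assoc]
      have e3 : ι Q v * q * p' = ι Q v * (q * p') := mul_assoc _ _ _
      have e4 : ι Q v * q * (ι Q v * q') = Q v • (involute q * q') := by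
        rw [mul_assoc, ← mul_assoc q, mul_iota_of_ortho v S hS hq, ← mul_assoc,
          ← mul_assoc, ι_sq_scalar, mul_assoc, Algebra.smul_def]
      rw [add_mul, mul_add, mul_add, e2, e3, e4, mul_add]
      abel

/-- Iterated projection along a list of vectors. -/
noncomputable def Pop : List V → CliffordAlgebra Q → CliffordAlgebra Q
  | [], x => x
  | v :: l, x => Pop l (Eop v x)

theorem Pop_fix (h2 : (2 : F) ≠ 0) :
    ∀ (l : List V), (∀ v ∈ l, Q v ≠ 0) →
    ∀ {x : CliffordAlgebra Q}, (∀ v ∈ l, contractLeft (Q.polarBilin v) x = 0) →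
    Pop l x = x
  | [], _, _, _ => rfl
  | v :: l, hl, x, hx => by
      rw [Pop, Eop_fix h2 (hl v (List.mem_cons_self)) (hx v (List.mem_cons_self))]
      exact Pop_fix h2 l (fun w hw => hl w (List.mem_cons_of_mem _ hw))
        (fun w hw => hx w (List.mem_cons_of_mem _ hw))

theorem Pop_mem_range (h2 : (2 : F) ≠ 0) :
    ∀ (l : List V), (∀ v ∈ l, Q v ≠ 0) →
    l.Pairwise (fun a b => QuadraticMap.polar Q a b = 0) →
    ∀ {x : CliffordAlgebra Q}, x ∈ Algebra.adjoin F (ι Q '' {w | w ∈ l}) →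
    Pop l x ∈ Set.range (algebraMap F (CliffordAlgebra Q))
  | [], _, _, x, hx => by
      have h0 : {w : V | w ∈ ([] : List V)} = (∅ : Set V) := by
        ext w; simp
      rw [h0, Set.image_empty, Algebra.adjoin_empty, Algebra.mem_bot] at hx
      exact hx
  | v :: l, hl, hp, x, hx => by
      have hset : {w : V | w ∈ v :: l} = insert v {w : V | w ∈ l} := by
        ext w; simp [List.mem_cons]
      rw [hset] at hx
      have hvl : ∀ w ∈ l, QuadraticMap.polar Q v w = 0 :=
        fun w hw => (List.pairwise_cons.mp hp).1 w hw
      have hS : ∀ w ∈ {w : V | w ∈ l}, QuadraticMap.polar Q w v = 0 := fun w hw => by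
        rw [QuadraticMap.polar_comm]; exact hvl w hw
      have hS' : ∀ w ∈ {w : V | w ∈ l}, QuadraticMap.polar Q v w = 0 := fun w hw => hvl w hw
      obtain ⟨p, q, hpm, hqm, rfl⟩ := decomp v _ hS hx
      have hEp : Eop v p = p := by
        have := Eop_mul_comm v _ hS' hpm (1 : CliffordAlgebra Q)
        rwa [mul_one, Eop_one h2 (hl v (List.mem_cons_self)), mul_one] at this
      have hstep : Eop v (p + ι Q v * q) = p := by
        rw [Eop_add, hEp, Eop_iota_mul v _ hS' hqm, add_zero]
      rw [Pop, hstep]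
      exact Pop_mem_range h2 l (fun w hw => hl w (List.mem_cons_of_mem _ hw))
        (List.pairwise_cons.mp hp).2 hpm

end SpinCentralAux

/-- Membership in the spin group `Spin(Q)`: `u` is an invertible element of the even
Clifford subalgebra with `u·ū = 1` (where `ū` is the reversal) and `u·ι(V)·u⁻¹ = ι(V)`. -/
def MemSpin {F V : Type*} [Field F] [AddCommGroup V] [Module F V]
    (Q : QuadraticForm F V) (u : CliffordAlgebra Q) : Prop :=
  IsUnit u ∧ u ∈ CliffordAlgebra.even Q ∧ u * reverse u = 1 ∧
    (fun x => u * x * Ring.inverse u) '' Set.range (ι Q) = Set.range (ι Q)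

/-- If `u ∈ Spin(Q)` satisfies `u·ι(v)·u⁻¹ = ι(v)` for all `v : V`, then `u = ±1`. -/
theorem spin_central_eq_pm_one {F V : Type*} [Field F] [AddCommGroup V] [Module F V]
    [Nontrivial V] [FiniteDimensional F V]
    (hF : ringChar F ≠ 2) (Q : QuadraticForm F V)
    (hQ : Q.polarBilin.Nondegenerate)
    (u : CliffordAlgebra Q) (hu : MemSpin Q u)
    (hcomm : ∀ v : V, u * ι Q v * Ring.inverse u = ι Q v) :
    u = 1 ∨ u = -1 := by
  classical
  obtain ⟨huU, huE, huR, -⟩ := hu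
  have h2 : (2 : F) ≠ 0 := Ring.two_ne_zero hF
  haveI : Invertible (2 : F) := invertibleOfNonzero h2
  -- orthogonal basis
  have hsymm : Q.polarBilin.IsSymm := ⟨fun x y => by
    simp [QuadraticMap.polarBilin_apply_apply, QuadraticMap.polar_comm]⟩
  obtain ⟨e, he⟩ := LinearMap.BilinForm.exists_orthogonal_basis hsymm
  -- anisotropy of the basis vectors
  have hQe : ∀ i, Q (e i) ≠ 0 := by
    intro i hQi
    have hzero : ∀ j, Q.polarBilin (e i) (e j) = 0 := by
      intro j
      rcases eq_or_ne j i with rfl | hij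
      · rw [SpinCentralAux.polarBilin_self, hQi, mul_zero]
      · exact he hij.symm
    have hz : Q.polarBilin (e i) = 0 := by
      apply e.ext
      intro j
      rw [hzero j]; rfl
    have := hQ.1 (e i) (fun y => by rw [hz]; rfl)
    exact e.ne_zero i this
  set l : List V := List.ofFn e with hldef
  have hl : ∀ v ∈ l, Q v ≠ 0 := by
    intro v hv
    obtain ⟨i, rfl⟩ := List.mem_ofFn.mp hv
    exact hQe i
  have hpair : l.Pairwise (fun a b => QuadraticMap.polar Q a b = 0) := by
    rw [hldef, List.pairwise_ofFn]
    intro i j hij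
    exact he (ne_of_lt hij)
  -- u commutes with all ι v
  have hc : ∀ v : V, u * ι Q v = ι Q v * u := by
    intro v
    have h1 := hcomm v
    calc u * ι Q v = u * ι Q v * (Ring.inverse u * u) := by
          rw [Ring.inverse_mul_cancel u huU, mul_one]
      _ = u * ι Q v * Ring.inverse u * u := by rw [← mul_assoc]
      _ = ι Q v * u := by rw [h1]
  -- involute fixes u
  have hinv : CliffordAlgebra.involute u = u := by
    exact CliffordAlgebra.involute_eq_of_mem_even huE
  -- all contractions of u vanish
  have hD : ∀ v : V, contractLeft (Q.polarBilin v) u = 0 := by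
    intro v
    rw [← SpinCentralAux.iota_mul_sub, hinv, hc v, sub_self]
  -- u lies in the subalgebra generated by the basis vectors
  have htop : ∀ x : CliffordAlgebra Q, x ∈ Algebra.adjoin F (ι Q '' {w | w ∈ l}) := by
    intro x
    induction x using CliffordAlgebra.induction with
    | algebraMap r => exact algebraMap_mem _ r
    | ι v =>
        have hv : ι Q v ∈ Submodule.span F (⇑(ι Q) '' Set.range ⇑e) := by
          rw [← Submodule.map_span, e.span_eq]
          exact Submodule.mem_map_of_mem Submodule.mem_top
        have hsub : (⇑(ι Q) '' Set.range ⇑e) ⊆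
            (Subalgebra.toSubmodule (Algebra.adjoin F (⇑(ι Q) '' {w | w ∈ l})) : Set _) := by
          rintro y ⟨w, ⟨i, rfl⟩, rfl⟩
          exact Algebra.subset_adjoin ⟨e i, List.mem_ofFn.mpr ⟨i, rfl⟩, rfl⟩
        exact Submodule.span_le.mpr hsub hv
    | add a b ha hb => exact add_mem ha hb
    | mul a b ha hb => exact mul_mem ha hb
  -- hence u is a scalar
  have hscalar : u ∈ Set.range (algebraMap F (CliffordAlgebra Q)) := by
    have := SpinCentralAux.Pop_mem_range h2 l hl hpair (htop u)
    rwa [SpinCentralAux.Pop_fix h2 l hl (fun v _ => hD v)] at this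
  obtain ⟨c, hcu⟩ := hscalar
  -- conclude using u * reverse u = 1
  rcases subsingleton_or_nontrivial (CliffordAlgebra Q) with hs | hs
  · exact Or.inl (Subsingleton.elim _ _)
  · have hrev : reverse (Q := Q) u = u := by rw [← hcu, reverse.commutes]
    have hsq : algebraMap F (CliffordAlgebra Q) (c * c) = algebraMap F _ 1 := by
      rw [map_mul, map_one, hcu]
      nth_rewrite 2 [← hrev]
      exact huR
    have hc1 : c * c = 1 := (algebraMap F (CliffordAlgebra Q)).injective hsq
    rcases mul_self_eq_one_iff.mp hc1 with rfl | rfl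
    · left; rw [← hcu, map_one]
    · right; rw [← hcu, map_neg, map_one]
end

section
/- Let v, w ∈ V with Q(v) ≠ 0 and Q(w) ≠ 0, and let s ∈ F with s ≠ 0 and s² = Q(v)·Q(w). Then the element u = s⁻¹·ι(v)·ι(w) belongs to Spin(Q), and u·ι(x)·u⁻¹ = ι(τ_v(τ_w(x))) for every x ∈ V, i.e., conjugation by u induces the product of the two reflections τ_v and τ_w on V. -/
open CliffordAlgebra

/-- The symmetry (reflection) `τ_v` along a vector `v` with `Q(v) ≠ 0`:
`τ_v(x) = x - (polar Q(x,v)/Q(v)) • v`. -/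
def reflectionAlong {F V : Type*} [Field F] [AddCommGroup V] [Module F V]
    (Q : QuadraticForm F V) (v : V) : V → V :=
  fun x => x - (QuadraticMap.polar Q x v / Q v) • v

lemma ι_conj_reflection {F V : Type*} [Field F] [AddCommGroup V] [Module F V]
    (Q : QuadraticForm F V) (v : V) (hv : Q v ≠ 0) (x : V) :
    ι Q v * ι Q x * ι Q v = -(Q v • ι Q (reflectionAlong Q v x)) := by
  have h : ι Q v * ι Q x = algebraMap F _ (QuadraticMap.polar Q v x) - ι Q x * ι Q v :=
    eq_sub_of_add_eq (ι_mul_ι_add_swap v x)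
  rw [h, sub_mul, mul_assoc, ι_sq_scalar, ← Algebra.smul_def, ← Algebra.commutes,
    ← Algebra.smul_def, reflectionAlong]
  rw [map_sub, map_smul, smul_sub, smul_smul, mul_div_cancel₀ _ hv,
    QuadraticMap.polar_comm]
  abel

lemma reflection_invol {F V : Type*} [Field F] [AddCommGroup V] [Module F V]
    (Q : QuadraticForm F V) (v : V) (hv : Q v ≠ 0) (x : V) :
    reflectionAlong Q v (reflectionAlong Q v x) = x := by
  unfold reflectionAlong
  rw [QuadraticMap.polar_sub_left, QuadraticMap.polar_smul_left, QuadraticMap.polar_self]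
  match_scalars
  · ring
  · field_simp
    ring_nf
    rw [mul_inv_cancel_right₀ hv]
    ring

/-- For anisotropic `v, w` and `s ∈ F^×` with `s² = Q(v)·Q(w)`, the element
`u = s⁻¹·ι(v)·ι(w)` lies in `Spin(Q)` and conjugation by `u` induces the product of the
reflections `τ_v` and `τ_w` on `V`. -/
theorem product_of_reflections_lifts_to_spin {F V : Type*} [Field F] [AddCommGroup V]
    [Module F V] [Nontrivial V] [FiniteDimensional F V]
    (hF : ringChar F ≠ 2) (Q : QuadraticForm F V)
    (hQ : Q.polarBilin.Nondegenerate)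
    (v w : V) (hv : Q v ≠ 0) (hw : Q w ≠ 0)
    (s : F) (hs : s ≠ 0) (hs2 : s ^ 2 = Q v * Q w) :
    MemSpin Q (s⁻¹ • (ι Q v * ι Q w)) ∧
      ∀ x : V,
        (s⁻¹ • (ι Q v * ι Q w)) * ι Q x * Ring.inverse (s⁻¹ • (ι Q v * ι Q w)) =
          ι Q (reflectionAlong Q v (reflectionAlong Q w x)) := by
  set a := ι Q v with ha
  set b := ι Q w with hb
  set u := s⁻¹ • (a * b) with hu
  set u' := s⁻¹ • (b * a) with hu'
  have hss : s⁻¹ * s⁻¹ * (Q v * Q w) = 1 := by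
    rw [← hs2]; field_simp
  have habba : a * b * (b * a) = algebraMap F _ (Q v * Q w) := by
    rw [mul_assoc a b (b * a), ← mul_assoc b b a, ι_sq_scalar, ← Algebra.smul_def,
      mul_smul_comm, ι_sq_scalar, Algebra.smul_def, ← map_mul, mul_comm (Q w) (Q v)]
  have hbaab : b * a * (a * b) = algebraMap F _ (Q v * Q w) := by
    rw [mul_assoc b a (a * b), ← mul_assoc a a b, ι_sq_scalar, ← Algebra.smul_def,
      mul_smul_comm, ι_sq_scalar, Algebra.smul_def, ← map_mul]
  have hmul : u * u' = 1 := by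
    rw [hu, hu', smul_mul_smul_comm, habba, Algebra.smul_def, ← map_mul, hss, map_one]
  have hmul' : u' * u = 1 := by
    rw [hu, hu', smul_mul_smul_comm, hbaab, Algebra.smul_def, ← map_mul, hss, map_one]
  have hUnit : IsUnit u := ⟨⟨u, u', hmul, hmul'⟩, rfl⟩
  have hinv : Ring.inverse u = u' := by
    rw [show u = ((⟨u, u', hmul, hmul'⟩ : (CliffordAlgebra Q)ˣ) : CliffordAlgebra Q) from rfl,
      Ring.inverse_unit]
    rfl
  have hconj : ∀ x : V, u * ι Q x * u' =
      ι Q (reflectionAlong Q v (reflectionAlong Q w x)) := by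
    intro x
    have h1 : b * ι Q x * b = -(Q w • ι Q (reflectionAlong Q w x)) :=
      ι_conj_reflection Q w hw x
    have h2 : a * ι Q (reflectionAlong Q w x) * a =
        -(Q v • ι Q (reflectionAlong Q v (reflectionAlong Q w x))) :=
      ι_conj_reflection Q v hv _
    have key : a * b * ι Q x * (b * a) = a * (b * ι Q x * b) * a := by noncomm_ring
    calc u * ι Q x * u'
        = (s⁻¹ * s⁻¹) • (a * b * ι Q x * (b * a)) := by
          rw [hu, hu', smul_mul_assoc, smul_mul_smul_comm]
      _ = (s⁻¹ * s⁻¹) • ((Q v * Q w) •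
            ι Q (reflectionAlong Q v (reflectionAlong Q w x))) := by
          rw [key, h1, mul_neg, neg_mul, mul_smul_comm, smul_mul_assoc, h2]
          simp only [smul_neg, neg_neg]
          rw [smul_smul (Q w) (Q v), mul_comm (Q w) (Q v)]
      _ = ι Q (reflectionAlong Q v (reflectionAlong Q w x)) := by
          rw [smul_smul, hss, one_smul]
  have hEven : u ∈ CliffordAlgebra.even Q := by
    have h0 : a * b ∈ CliffordAlgebra.even Q := ι_mul_ι_mem_evenOdd_zero Q v w
    exact Subalgebra.smul_mem _ h0 _
  have hrev : u * reverse u = 1 := by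
    have : reverse u = u' := by
      rw [hu, hu', map_smul, reverse.map_mul, reverse_ι, reverse_ι]
    rw [this, hmul]
  refine ⟨⟨hUnit, hEven, hrev, ?_⟩, fun x => by rw [hinv, hconj]⟩
  rw [hinv]
  ext y
  constructor
  · rintro ⟨_, ⟨x, rfl⟩, rfl⟩
    exact ⟨_, (hconj x).symm⟩
  · rintro ⟨x, rfl⟩
    refine ⟨ι Q (reflectionAlong Q w (reflectionAlong Q v x)), ⟨_, rfl⟩, ?_⟩
    show u * _ * u' = _
    rw [hconj, reflection_invol Q w hw, reflection_invol Q v hv]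
end

section
/- In the ring R = 𝔽_q[X,Y]/(P(X,Y) − Y), the square of the ideal I = (x,y) equals the principal ideal generated by y: I² = (y). -/
open MvPolynomial

lemma homog_decomp (F : Type*) [Field F] (P : MvPolynomial (Fin 2) F) (hP : P.IsHomogeneous 2) :
    P = C (coeff (Finsupp.single 0 2) P) * X 0 ^ 2
      + C (coeff (Finsupp.single 0 1 + Finsupp.single 1 1) P) * (X 0 * X 1)
      + C (coeff (Finsupp.single 1 2) P) * X 1 ^ 2 := by
  have key : ∀ d : Fin 2 →₀ ℕ, d 0 + d 1 = 2 →
      d = Finsupp.single 0 2 ∨ d = Finsupp.single 0 1 + Finsupp.single 1 1 ∨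
        d = Finsupp.single 1 2 := by
    intro d hd
    have hrep : d = Finsupp.single 0 (d 0) + Finsupp.single 1 (d 1) := by
      ext i; fin_cases i <;> simp [Finsupp.single_apply]
    have : (d 0 = 2 ∧ d 1 = 0) ∨ (d 0 = 1 ∧ d 1 = 1) ∨ (d 0 = 0 ∧ d 1 = 2) := by omega
    rcases this with ⟨h0, h1⟩ | ⟨h0, h1⟩ | ⟨h0, h1⟩ <;> rw [hrep, h0, h1] <;> simp
  have ne12 : (Finsupp.single 0 2 : Fin 2 →₀ ℕ) ≠ Finsupp.single 0 1 + Finsupp.single 1 1 := by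
    intro h; have := DFunLike.congr_fun h 1; simp [Finsupp.single_apply] at this
  have ne13 : (Finsupp.single 0 2 : Fin 2 →₀ ℕ) ≠ Finsupp.single 1 2 := by
    intro h; have := DFunLike.congr_fun h 0; simp [Finsupp.single_apply] at this
  have ne23 : (Finsupp.single 0 1 + Finsupp.single 1 1 : Fin 2 →₀ ℕ) ≠ Finsupp.single 1 2 := by
    intro h; have := DFunLike.congr_fun h 0; simp [Finsupp.single_apply] at this
  apply MvPolynomial.ext
  intro d
  rw [X_pow_eq_monomial, X_pow_eq_monomial, X, X, monomial_mul, C_mul_monomial,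
    C_mul_monomial, C_mul_monomial]
  simp only [coeff_add, coeff_monomial, mul_one, one_mul]
  by_cases h1 : d = Finsupp.single 0 2
  · subst h1; simp [ne12, ne13, ne23, ne12.symm, ne13.symm, ne23.symm]
  by_cases h2 : d = Finsupp.single 0 1 + Finsupp.single 1 1
  · subst h2; simp [ne12, ne13, ne23, ne12.symm, ne13.symm, ne23.symm]
  by_cases h3 : d = Finsupp.single 1 2
  · subst h3; simp [ne12, ne13, ne23, ne12.symm, ne13.symm, ne23.symm]
  · have hdeg : d.degree = d 0 + d 1 := by
      rw [Finsupp.degree, ← Fin.sum_univ_two (fun i => d i)]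
      exact Finset.sum_subset (Finset.subset_univ _)
        (fun i _ hi => Finsupp.notMem_support_iff.mp hi)
    have : d.degree ≠ 2 := by
      intro h
      rcases key d (by omega) with h' | h' | h' <;> [exact h1 h'; exact h2 h'; exact h3 h']
    rw [hP.coeff_eq_zero this]
    have h1' : Finsupp.single 0 2 ≠ d := Ne.symm h1
    have h2' : Finsupp.single 0 1 + Finsupp.single 1 1 ≠ d := Ne.symm h2
    have h3' : Finsupp.single 1 2 ≠ d := Ne.symm h3
    simp [h1, h2, h3, h1', h2', h3']

set_option maxHeartbeats 1000000 in
set_option synthInstance.maxHeartbeats 400000 in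
/-- In `R = 𝔽_q[X,Y]/(P(X,Y) − Y)`, with `P` an irreducible quadratic form and `q` odd,
the square of the ideal `I = (x, y)` is the principal ideal `(y)`. -/
theorem ideal_sq_eq_span_y (F : Type*) [Field F] [Fintype F] (hF : Odd (Fintype.card F))
    (P : MvPolynomial (Fin 2) F) (hP : P.IsHomogeneous 2) (hPirr : Irreducible P) :
    (Ideal.span {Ideal.Quotient.mk (Ideal.span {P - X 1}) (X 0),
        Ideal.Quotient.mk (Ideal.span {P - X 1}) (X 1)}) ^ 2 =
      Ideal.span {Ideal.Quotient.mk (Ideal.span {P - X 1}) (X 1)} := by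
  set J : Ideal (MvPolynomial (Fin 2) F) := Ideal.span {P - X 1} with hJ
  set mk := Ideal.Quotient.mk J with hmk
  set a := coeff (Finsupp.single 0 2) P with haa
  set b := coeff (Finsupp.single 0 1 + Finsupp.single 1 1) P with hbb
  set c := coeff (Finsupp.single 1 2) P with hcc
  have hdecomp := homog_decomp F P hP
  rw [← haa, ← hbb, ← hcc] at hdecomp
  -- a ≠ 0, by irreducibility
  have ha : a ≠ 0 := by
    intro ha0
    have hfact : P = X 1 * (C b * X 0 + C c * X 1) := by
      rw [hdecomp, ha0, map_zero]; ring
    rcases hPirr.isUnit_or_isUnit hfact with hu | hu <;>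
      obtain ⟨v, hv⟩ := isUnit_iff_exists_inv.mp hu <;>
      have hcc := congrArg constantCoeff hv <;>
      simp [map_mul, map_add, constantCoeff_X, constantCoeff_C] at hcc
  set x := mk (X 0) with hx
  set y := mk (X 1) with hy'
  have hy : y = mk P := by
    rw [hy', hmk, Ideal.Quotient.eq]
    rw [show (X 1 : MvPolynomial (Fin 2) F) - P = -(P - X 1) by ring]
    exact J.neg_mem (Ideal.subset_span rfl)
  have hrel : y = mk (C a) * (x * x) + mk (C b) * (x * y) + mk (C c) * (y * y) := by
    conv_lhs => rw [hy, hdecomp]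
    simp only [map_add, map_mul, map_pow]
    ring
  have hunit : mk (C a⁻¹) * mk (C a) = 1 := by
    rw [← map_mul, ← C_mul, inv_mul_cancel₀ ha, C_1, map_one]
  have hxx : x * x ∈ Ideal.span {y} := by
    rw [Ideal.mem_span_singleton]
    refine ⟨mk (C a⁻¹) * (1 - mk (C b) * x - mk (C c) * y), ?_⟩
    have h1 : mk (C a) * (x * x) = y * (1 - mk (C b) * x - mk (C c) * y) := by
      linear_combination -hrel
    calc x * x = mk (C a⁻¹) * (mk (C a) * (x * x)) := by rw [← mul_assoc, hunit, one_mul]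
      _ = mk (C a⁻¹) * (y * (1 - mk (C b) * x - mk (C c) * y)) := by rw [h1]
      _ = y * (mk (C a⁻¹) * (1 - mk (C b) * x - mk (C c) * y)) := by ring
  rw [sq, Ideal.span_pair_mul_span_pair]
  apply le_antisymm
  · rw [Ideal.span_le]
    rintro r hr
    simp only [Set.mem_insert_iff, Set.mem_singleton_iff] at hr
    rcases hr with rfl | rfl | rfl | rfl
    · exact hxx
    · exact Ideal.mem_span_singleton.mpr (dvd_mul_left y x)
    · exact Ideal.mem_span_singleton.mpr (dvd_mul_right y x)
    · exact Ideal.mem_span_singleton.mpr (dvd_mul_left y y)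
  · rw [Ideal.span_le, Set.singleton_subset_iff, SetLike.mem_coe]
    set K := Ideal.span {x * x, x * y, y * x, y * y} with hK
    have g1 : x * x ∈ K := Ideal.subset_span (by simp)
    have g2 : x * y ∈ K := Ideal.subset_span (by simp)
    have g4 : y * y ∈ K := Ideal.subset_span (by simp)
    nth_rewrite 1 [hrel]
    exact K.add_mem (K.add_mem (K.mul_mem_left _ g1) (K.mul_mem_left _ g2))
      (K.mul_mem_left _ g4)
end

section
/- In the ring R = 𝔽_q[X,Y]/(P(X,Y) − Y), the ideal I = (x,y) is not a principal ideal. -/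
open MvPolynomial
set_option synthInstance.maxHeartbeats 400000
set_option maxHeartbeats 1600000

section Aux

lemma fin2_degree (d : Fin 2 →₀ ℕ) : d.degree = d 0 + d 1 := by
  rw [Finsupp.degree_apply, Finset.sum_subset (Finset.subset_univ _)
    (by intro i _ hi; exact Finsupp.notMem_support_iff.mp hi), Fin.sum_univ_two]

lemma binary_quadratic {F : Type*} [CommRing F] (P : MvPolynomial (Fin 2) F)
    (hP : P.IsHomogeneous 2) :
    ∃ a b c : F, P = C a * X 0 ^ 2 + C b * (X 0 * X 1) + C c * X 1 ^ 2 := by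
  refine ⟨coeff (Finsupp.single 0 2) P, coeff (Finsupp.single 0 1 + Finsupp.single 1 1) P,
    coeff (Finsupp.single 1 2) P, ?_⟩
  have e1 : ∀ a : F, C a * X 0 ^ 2 = monomial (Finsupp.single (0 : Fin 2) 2) a := by
    intro a; rw [X_pow_eq_monomial, C_mul_monomial, mul_one]
  have e2 : ∀ b : F, C b * (X 0 * X 1)
      = monomial (Finsupp.single (0 : Fin 2) 1 + Finsupp.single 1 1) b := by
    intro b
    rw [show (X 0 : MvPolynomial (Fin 2) F) = monomial (Finsupp.single 0 1) 1 from rfl,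
      show (X 1 : MvPolynomial (Fin 2) F) = monomial (Finsupp.single 1 1) 1 from rfl,
      monomial_mul, C_mul_monomial]
    ring_nf
  have e3 : ∀ c : F, C c * X 1 ^ 2 = monomial (Finsupp.single (1 : Fin 2) 2) c := by
    intro c; rw [X_pow_eq_monomial, C_mul_monomial, mul_one]
  rw [e1, e2, e3]
  apply MvPolynomial.ext
  intro m
  rw [coeff_add, coeff_add, coeff_monomial, coeff_monomial, coeff_monomial]
  by_cases hd : m.degree = 2
  · have h01 : m 0 + m 1 = 2 := by rw [← fin2_degree]; exact hd
    have hcase : m 0 = 0 ∨ m 0 = 1 ∨ m 0 = 2 := by omega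
    rcases hcase with h | h | h
    · have hm : m = Finsupp.single 1 2 := by
        ext i; fin_cases i <;> simp_all <;> omega
      subst hm
      rw [if_pos rfl, if_neg (fun heq => by
          have h0 := DFunLike.congr_fun heq 0; simp at h0),
        if_neg (fun heq => by
          have h0 := DFunLike.congr_fun heq 1; simp at h0)]
      ring
    · have hm : m = Finsupp.single 0 1 + Finsupp.single 1 1 := by
        ext i; fin_cases i <;> simp_all <;> omega
      subst hm
      rw [if_pos rfl, if_neg (fun heq => by
          have h0 := DFunLike.congr_fun heq 1; simp at h0),
        if_neg (fun heq => by
          have h0 := DFunLike.congr_fun heq 0; simp at h0)]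
      ring
    · have hm : m = Finsupp.single 0 2 := by
        ext i; fin_cases i <;> simp_all <;> omega
      subst hm
      rw [if_pos rfl, if_neg (fun heq => by
          have h0 := DFunLike.congr_fun heq 0; simp at h0),
        if_neg (fun heq => by
          have h0 := DFunLike.congr_fun heq 0; simp at h0)]
      ring
  · rw [hP.coeff_eq_zero hd,
      if_neg (fun heq => hd (by rw [← heq, fin2_degree]; simp)),
      if_neg (fun heq => hd (by rw [← heq, fin2_degree]; simp)),
      if_neg (fun heq => hd (by rw [← heq, fin2_degree]; simp))]
    ring

lemma not_unit_of_eval_zero {F : Type*} [Field F] (p : MvPolynomial (Fin 2) F)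
    (w : Fin 2 → F) (h : eval w p = 0) : ¬ IsUnit p := by
  intro hu
  have := hu.map (eval w)
  rw [h] at this
  simp at this

lemma c_ne_zero {F : Type*} [Field F] {P : MvPolynomial (Fin 2) F} {a b c : F}
    (hP3 : P = C a * X 0 ^ 2 + C b * (X 0 * X 1) + C c * X 1 ^ 2)
    (hPirr : Irreducible P) : c ≠ 0 := by
  rintro rfl
  have hfac : P = X 0 * (C a * X 0 + C b * X 1) := by rw [hP3, map_zero]; ring
  rcases hPirr.isUnit_or_isUnit hfac with hu | hu
  · exact not_unit_of_eval_zero _ ![0, 0] (by simp) hu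
  · exact not_unit_of_eval_zero _ ![b, -a] (by simp; ring) hu

lemma no_root {F : Type*} [Field F] {P : MvPolynomial (Fin 2) F} {a b c : F}
    (hP3 : P = C a * X 0 ^ 2 + C b * (X 0 * X 1) + C c * X 1 ^ 2)
    (hPirr : Irreducible P) (hc : c ≠ 0) (r : F) (hr : c * r ^ 2 + b * r + a = 0) : False := by
  have hfac : P = (X 1 - C r * X 0) * (C c * X 1 + C (c * r + b) * X 0) := by
    rw [hP3]
    have hC : (C a : MvPolynomial (Fin 2) F)
        = - (C c * C r * C r) - C b * C r := by
      rw [← map_mul, ← map_mul, ← map_mul, ← map_neg, ← map_sub]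
      congr 1
      linear_combination hr
    rw [map_add, map_mul, hC]
    ring
  rcases hPirr.isUnit_or_isUnit hfac with hu | hu
  · exact not_unit_of_eval_zero _ ![1, r] (by simp) hu
  · exact not_unit_of_eval_zero _ ![c, -(c * r + b)] (by simp; ring) hu

lemma Qp_irred {F : Type*} [Field F] {P : MvPolynomial (Fin 2) F} {a b c : F}
    (hP3 : P = C a * X 0 ^ 2 + C b * (X 0 * X 1) + C c * X 1 ^ 2)
    (hPirr : Irreducible P) (hc : c ≠ 0) :
    Irreducible (Polynomial.C c * Polynomial.X ^ 2 + Polynomial.C b * Polynomial.X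
      + Polynomial.C a) := by
  set Qp : Polynomial F := Polynomial.C c * Polynomial.X ^ 2 + Polynomial.C b * Polynomial.X
      + Polynomial.C a with hQp
  have hdeg : Qp.natDegree = 2 := Polynomial.natDegree_quadratic hc
  rw [Polynomial.irreducible_iff_roots_eq_zero_of_degree_le_three (by omega) (by omega)]
  apply Multiset.eq_zero_of_forall_notMem
  intro r hrmem
  have hQne : Qp ≠ 0 := fun h => by simp [h] at hdeg
  rw [Polynomial.mem_roots hQne, Polynomial.IsRoot] at hrmem
  have : c * r ^ 2 + b * r + a = 0 := by simpa [hQp] using hrmem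
  exact no_root hP3 hPirr hc r this

end Aux

/-- In `R = 𝔽_q[X,Y]/(P(X,Y) − Y)`, with `P` an irreducible quadratic form and `q` odd,
the ideal `I = (x, y)` is not principal. -/
theorem ideal_xy_not_principal (F : Type*) [Field F] [Fintype F] (hF : Odd (Fintype.card F))
    (P : MvPolynomial (Fin 2) F) (hP : P.IsHomogeneous 2) (hPirr : Irreducible P) :
    ¬ Submodule.IsPrincipal
        (Ideal.span {Ideal.Quotient.mk (Ideal.span {P - X 1}) (X 0),
          Ideal.Quotient.mk (Ideal.span {P - X 1}) (X 1)}) := by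
  obtain ⟨a, b, c, hP3⟩ := binary_quadratic P hP
  have hc : c ≠ 0 := c_ne_zero hP3 hPirr
  have hQirr := Qp_irred hP3 hPirr hc
  intro hprin
  set Qp : Polynomial F := Polynomial.C c * Polynomial.X ^ 2 + Polynomial.C b * Polynomial.X
      + Polynomial.C a with hQpdef
  have hQdeg : Qp.natDegree = 2 := Polynomial.natDegree_quadratic hc
  have hQne : Qp ≠ 0 := hQirr.ne_zero
  have hQprime : Prime Qp := hQirr.prime
  set K := RatFunc F with hK
  set ι : Polynomial F →+* K := (algebraMap (Polynomial F) K : Polynomial F →+* K) with hι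
  have ιinj : Function.Injective ι := RatFunc.algebraMap_injective F
  set qq : K := ι Qp with hqqdef
  have hqq : qq ≠ 0 := fun h => hQne (ιinj (by simpa using h))
  set t : K := ι Polynomial.X with htdef
  have ht : t ≠ 0 := fun h => Polynomial.X_ne_zero (ιinj (by simpa using h))
  set xh : K := t / qq with hxhdef
  set yh : K := t ^ 2 / qq with hyhdef
  have hxh : xh ≠ 0 := div_ne_zero ht hqq
  have hyx : yh = t * xh := by rw [hxhdef, hyhdef]; ring
  set v : Fin 2 → K := ![xh, yh] with hvdef
  have hv0 : v 0 = xh := rfl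
  have hv1 : v 1 = yh := rfl
  -- algebra map F → K factors through polynomials
  have halg : ∀ z : F, algebraMap F K z = ι (Polynomial.C z) :=
    fun z => IsScalarTower.algebraMap_apply F (Polynomial F) K z
  have hqqexp : qq = ι (Polynomial.C c) * t ^ 2 + ι (Polynomial.C b) * t + ι (Polynomial.C a) := by
    rw [hqqdef, hQpdef]; push_cast [map_add, map_mul, map_pow]; rfl
  -- well-definedness
  have hPzero : aeval v (P - X 1) = 0 := by
    rw [map_sub, aeval_X, hv1, hP3]
    simp only [map_add, map_mul, map_pow, aeval_C, aeval_X, hv0, hv1]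
    rw [halg, halg, halg, hxhdef, hyhdef]
    simp only [div_eq_mul_inv]
    linear_combination (-(t ^ 2 * qq⁻¹ ^ 2)) * hqqexp + (t ^ 2 * qq⁻¹) * (mul_inv_cancel₀ hqq)
  -- the ring hom from the quotient
  have hker : ∀ z ∈ Ideal.span {P - X 1}, (aeval v).toRingHom z = 0 := by
    intro z hz
    rw [Ideal.mem_span_singleton] at hz
    obtain ⟨w, rfl⟩ := hz
    rw [map_mul]
    simp only [AlgHom.toRingHom_eq_coe, RingHom.coe_coe] at *
    rw [hPzero, zero_mul]
  set φ : (MvPolynomial (Fin 2) F ⧸ Ideal.span {P - X 1}) →+* K :=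
    Ideal.Quotient.lift (Ideal.span {P - X 1}) (aeval v).toRingHom hker with hφdef
  have hφmk : ∀ p : MvPolynomial (Fin 2) F,
      φ (Ideal.Quotient.mk (Ideal.span {P - X 1}) p) = aeval v p := by
    intro p
    rw [hφdef, Ideal.Quotient.lift_mk]
    rfl
  -- the "regular at infinity" predicate
  set Pred : K → Prop := fun s => ∃ (f : Polynomial F) (n : ℕ),
    f.natDegree ≤ 2 * n ∧ s * qq ^ n = ι f with hPreddef
  have hpowdeg : ∀ n : ℕ, (Qp ^ n).natDegree = 2 * n := by
    intro n
    rw [Polynomial.natDegree_pow' (pow_ne_zero n (Polynomial.leadingCoeff_ne_zero.mpr hQne)),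
      hQdeg, Nat.mul_comm]
  have hmul : ∀ s₁ s₂, Pred s₁ → Pred s₂ → Pred (s₁ * s₂) := by
    rintro s₁ s₂ ⟨f₁, n₁, hd₁, he₁⟩ ⟨f₂, n₂, hd₂, he₂⟩
    refine ⟨f₁ * f₂, n₁ + n₂, ?_, ?_⟩
    · calc (f₁ * f₂).natDegree ≤ f₁.natDegree + f₂.natDegree := Polynomial.natDegree_mul_le
        _ ≤ 2 * (n₁ + n₂) := by omega
    · rw [pow_add, map_mul, ← he₁, ← he₂]; ring
  have hadd : ∀ s₁ s₂, Pred s₁ → Pred s₂ → Pred (s₁ + s₂) := by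
    rintro s₁ s₂ ⟨f₁, n₁, hd₁, he₁⟩ ⟨f₂, n₂, hd₂, he₂⟩
    refine ⟨f₁ * Qp ^ n₂ + f₂ * Qp ^ n₁, n₁ + n₂, ?_, ?_⟩
    · apply le_trans (Polynomial.natDegree_add_le _ _)
      have b1 : (f₁ * Qp ^ n₂).natDegree ≤ 2 * (n₁ + n₂) := by
        calc (f₁ * Qp ^ n₂).natDegree ≤ f₁.natDegree + (Qp ^ n₂).natDegree :=
              Polynomial.natDegree_mul_le
          _ ≤ 2 * (n₁ + n₂) := by rw [hpowdeg]; omega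
      have b2 : (f₂ * Qp ^ n₁).natDegree ≤ 2 * (n₁ + n₂) := by
        calc (f₂ * Qp ^ n₁).natDegree ≤ f₂.natDegree + (Qp ^ n₁).natDegree :=
              Polynomial.natDegree_mul_le
          _ ≤ 2 * (n₁ + n₂) := by rw [hpowdeg]; omega
      omega
    · rw [map_add, map_mul, map_mul, map_pow, map_pow, ← he₁, ← he₂, ← hqqdef, pow_add]
      ring
  have hxhP : Pred xh := by
    refine ⟨Polynomial.X, 1, by simp, ?_⟩
    rw [pow_one, hxhdef, div_mul_cancel₀ _ hqq]
  have hyhP : Pred yh := by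
    refine ⟨Polynomial.X ^ 2, 1, ?_, ?_⟩
    · simp [Polynomial.natDegree_X_pow]
    · rw [pow_one, hyhdef, div_mul_cancel₀ _ hqq, map_pow]
  have hPredAll : ∀ p : MvPolynomial (Fin 2) F, Pred (aeval v p) := by
    intro p
    induction p using MvPolynomial.induction_on with
    | C r =>
      refine ⟨Polynomial.C r, 0, by simp, ?_⟩
      rw [pow_zero, mul_one, aeval_C, halg]
    | add p q hp hq => rw [map_add]; exact hadd _ _ hp hq
    | mul_X p i hp =>
      rw [map_mul, aeval_X]
      apply hmul _ _ hp
      fin_cases i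
      · exact hxhP
      · exact hyhP
  have hPredQ : ∀ z : MvPolynomial (Fin 2) F ⧸ Ideal.span {P - X 1}, Pred (φ z) := by
    intro z
    obtain ⟨p, rfl⟩ := Ideal.Quotient.mk_surjective z
    rw [hφmk]; exact hPredAll p
  -- extract the generator
  obtain ⟨g, hg⟩ := (Submodule.isPrincipal_iff _).mp hprin
  rw [Ideal.submodule_span_eq] at hg
  set mkq := Ideal.Quotient.mk (Ideal.span {P - X 1}) with hmkq
  have hxg : mkq (X 0) ∈ Ideal.span {g} := by
    rw [← hg]; exact Ideal.subset_span (by simp)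
  have hyg : mkq (X 1) ∈ Ideal.span {g} := by
    rw [← hg]; exact Ideal.subset_span (by simp)
  have hgI : g ∈ Ideal.span {mkq (X 0), mkq (X 1)} := by
    rw [hg]; exact Ideal.subset_span (by simp)
  obtain ⟨h, hh⟩ := Ideal.mem_span_singleton'.mp hxg
  obtain ⟨k, hk⟩ := Ideal.mem_span_singleton'.mp hyg
  obtain ⟨u, w, huw⟩ := Ideal.mem_span_pair.mp hgI
  -- push to K
  have hφx : φ (mkq (X 0)) = xh := by rw [hφmk]; rw [aeval_X]; exact hv0
  have hφy : φ (mkq (X 1)) = yh := by rw [hφmk]; rw [aeval_X]; exact hv1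
  have Hh : φ h * φ g = xh := by rw [← map_mul, hh, hφx]
  have Hk : φ k * φ g = yh := by rw [← map_mul, hk, hφy]
  have Huw : φ u * xh + φ w * yh = φ g := by
    rw [← hφx, ← hφy, ← map_mul, ← map_mul, ← map_add, huw]
  have hG : φ g ≠ 0 := fun h0 => hxh (by rw [← Hh, h0, mul_zero])
  -- K = t * H
  have hKH : φ k = t * φ h := by
    have : φ k * φ g = (t * φ h) * φ g := by rw [Hk, hyx, ← Hh]; ring
    exact mul_right_cancel₀ hG this
  -- S
  set S : K := φ u + t * φ w with hSdef
  have hGS : φ g = xh * S := by rw [hSdef, ← Huw, hyx]; ring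
  have hHS : φ h * S = 1 := by
    apply mul_left_cancel₀ hxh
    calc xh * (φ h * S) = φ h * (xh * S) := by ring
      _ = φ h * φ g := by rw [← hGS]
      _ = xh := Hh
      _ = xh * 1 := (mul_one xh).symm
  -- representations
  obtain ⟨f₁, n₁, hd₁, he₁⟩ := hPredQ h
  obtain ⟨f₂, n₂, hd₂, he₂⟩ := hPredQ k
  obtain ⟨u₁, p₁, hdu, heu⟩ := hPredQ u
  obtain ⟨v₁, r₁, hdv, hev⟩ := hPredQ w
  set e : Polynomial F := u₁ * Qp ^ r₁ + Polynomial.X * (v₁ * Qp ^ p₁) with hedef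
  have hde : e.natDegree ≤ 2 * (p₁ + r₁) + 1 := by
    apply le_trans (Polynomial.natDegree_add_le _ _)
    have b1 : (u₁ * Qp ^ r₁).natDegree ≤ 2 * (p₁ + r₁) := by
      calc (u₁ * Qp ^ r₁).natDegree ≤ u₁.natDegree + (Qp ^ r₁).natDegree :=
            Polynomial.natDegree_mul_le
        _ ≤ 2 * (p₁ + r₁) := by rw [hpowdeg]; omega
    have b2 : (Polynomial.X * (v₁ * Qp ^ p₁)).natDegree ≤ 2 * (p₁ + r₁) + 1 := by
      calc (Polynomial.X * (v₁ * Qp ^ p₁)).natDegree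
          ≤ Polynomial.X.natDegree + (v₁ * Qp ^ p₁).natDegree := Polynomial.natDegree_mul_le
        _ ≤ 1 + (v₁.natDegree + (Qp ^ p₁).natDegree) := by
            simp only [Polynomial.natDegree_X]
            exact Nat.add_le_add_left Polynomial.natDegree_mul_le _
        _ ≤ 2 * (p₁ + r₁) + 1 := by rw [hpowdeg]; omega
    omega
  have hSe : S * qq ^ (p₁ + r₁) = ι e := by
    rw [hedef, map_add, map_mul, map_mul, map_mul, map_pow, map_pow, ← heu, ← hev, ← hqqdef,
      ← htdef, hSdef, pow_add]
    ring
  -- key equation 1 : f₁ * e = Qp ^ (n₁ + (p₁ + r₁))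
  have E1 : f₁ * e = Qp ^ (n₁ + (p₁ + r₁)) := by
    apply ιinj
    rw [map_mul, ← he₁, ← hSe, map_pow, ← hqqdef]
    calc φ h * qq ^ n₁ * (S * qq ^ (p₁ + r₁))
        = (φ h * S) * (qq ^ n₁ * qq ^ (p₁ + r₁)) := by ring
      _ = qq ^ (n₁ + (p₁ + r₁)) := by rw [hHS, one_mul, ← pow_add]
  -- key equation 2 : f₂ * Qp ^ n₁ = X * f₁ * Qp ^ n₂
  have E2 : f₂ * Qp ^ n₁ = Polynomial.X * f₁ * Qp ^ n₂ := by
    apply ιinj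
    rw [map_mul, map_mul, map_mul, map_pow, map_pow, ← he₁, ← he₂, ← hqqdef, ← htdef]
    rw [hKH]
    ring
  -- f₁ is (up to unit) a power of Qp
  have hdvd : f₁ ∣ Qp ^ (n₁ + (p₁ + r₁)) := ⟨e, E1.symm⟩
  obtain ⟨i, hi, hassoc⟩ := (dvd_prime_pow hQprime _).mp hdvd
  obtain ⟨wu, hwu⟩ := hassoc
  have hf₁ne : f₁ ≠ 0 := by
    rintro rfl
    exact pow_ne_zero _ hQne (by rw [← hwu, zero_mul])
  have hene : e ≠ 0 := by
    intro h0
    exact pow_ne_zero _ hQne (by rw [← E1, h0, mul_zero])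
  have hwne : (wu : Polynomial F) ≠ 0 := wu.ne_zero
  have hdegf₁ : f₁.natDegree = 2 * i := by
    have := congrArg Polynomial.natDegree hwu
    rw [Polynomial.natDegree_mul hf₁ne hwne, hpowdeg,
      Polynomial.natDegree_eq_zero_of_isUnit wu.isUnit, add_zero] at this
    exact this
  have hdegE1 : f₁.natDegree + e.natDegree = 2 * (n₁ + (p₁ + r₁)) := by
    have := congrArg Polynomial.natDegree E1
    rwa [Polynomial.natDegree_mul hf₁ne hene, hpowdeg] at this
  -- from the degree bounds : i = n₁ and f₁ = wu⁻¹ * Qp ^ n₁ exactly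
  have hin : i = n₁ := by omega
  subst hin
  -- now E2 gives the contradiction
  have hf₂ne : f₂ ≠ 0 := by
    rintro rfl
    rw [zero_mul] at E2
    rcases mul_eq_zero.mp E2.symm with h0 | h0
    · rcases mul_eq_zero.mp h0 with h1 | h1
      · exact Polynomial.X_ne_zero h1
      · exact hf₁ne h1
    · exact pow_ne_zero _ hQne h0
  have hdegE2 : f₂.natDegree + 2 * i = 1 + f₁.natDegree + 2 * n₂ := by
    have := congrArg Polynomial.natDegree E2
    rw [Polynomial.natDegree_mul hf₂ne (pow_ne_zero _ hQne), hpowdeg,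
      Polynomial.natDegree_mul (mul_ne_zero Polynomial.X_ne_zero hf₁ne) (pow_ne_zero _ hQne),
      Polynomial.natDegree_mul Polynomial.X_ne_zero hf₁ne, hpowdeg,
      Polynomial.natDegree_X] at this
    exact this
  omega
end

section
/- The ideal class group of R = 𝔽_q[X,Y]/(P(X,Y) − Y) contains an element c with c ≠ 1 and c² = 1, i.e., an element of order 2; in particular, being finite, the class group of R has even order. -/
set_option linter.unnecessarySeqFocus false


open Polynomial in
theorem key_parity' {F : Type*} [Field F] {Q : F[X]} (hQ : Prime Q) (hQt : ¬ Q ∣ X) :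
    ∀ (j : ℕ) (f α : F[X]), IsUnit α → α * f ^ 2 * Q = X ^ 2 * Q ^ (2 * j) → False := by
  intro j
  induction j with
  | zero =>
    intro f α hα he
    rw [mul_zero, pow_zero, mul_one] at he
    have : Q ∣ X ^ 2 := ⟨α * f ^ 2, by linear_combination -he⟩
    rcases hQ.dvd_of_dvd_pow this with h
    exact hQt h
  | succ j ih =>
    intro f α hα he
    have hQ0 : Q ≠ 0 := hQ.ne_zero
    have he' : α * f ^ 2 = X ^ 2 * Q ^ (2 * j + 1) := by
      apply mul_right_cancel₀ hQ0
      rw [he]; ring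
    have hQf : Q ∣ f := by
      apply hQ.dvd_of_dvd_pow (n := 2)
      have : Q ∣ α * f ^ 2 := by
        rw [he']
        exact Dvd.dvd.mul_left (dvd_pow_self Q (by omega)) _
      rcases hα.exists_left_inv with ⟨β, hβ⟩
      obtain ⟨d, hd⟩ := this
      exact ⟨β * d, by rw [← one_mul (f^2), ← hβ]; linear_combination β * hd⟩
    obtain ⟨f₁, rfl⟩ := hQf
    apply ih f₁ α hα
    apply mul_right_cancel₀ (pow_ne_zero 2 hQ0)
    linear_combination he

open MvPolynomial

lemma fin2_cases (d : Fin 2 →₀ ℕ) (h : d.degree = 2) :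
    d = Finsupp.single 0 2 ∨ d = Finsupp.single 0 1 + Finsupp.single 1 1 ∨
      d = Finsupp.single 1 2 := by
  rw [fin2_degree] at h
  have h0 : d 0 = 0 ∨ d 0 = 1 ∨ d 0 = 2 := by omega
  have hext : ∀ e : Fin 2 →₀ ℕ, d 0 = e 0 → d 1 = e 1 → d = e := by
    intro e h1 h2
    ext i
    fin_cases i <;> assumption
  rcases h0 with h0 | h0 | h0
  · right; right; apply hext <;> simp [h0] <;> omega
  · right; left; apply hext <;> simp [h0, Finsupp.single_apply] <;> omega
  · left; apply hext <;> simp [h0, Finsupp.single_apply] <;> omega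

lemma homog2_decomp' {F : Type*} [CommRing F] {P : MvPolynomial (Fin 2) F}
    (hP : P.IsHomogeneous 2) :
    P = C (coeff (Finsupp.single 0 2) P) * X 0 ^ 2
      + C (coeff (Finsupp.single 0 1 + Finsupp.single 1 1) P) * (X 0 * X 1)
      + C (coeff (Finsupp.single 1 2) P) * X 1 ^ 2 := by
  have hxy : (X 0 * X 1 : MvPolynomial (Fin 2) F)
      = monomial (Finsupp.single 0 1 + Finsupp.single 1 1) 1 := by
    rw [X, X, monomial_mul, one_mul]
  ext d
  rw [coeff_add, coeff_add, hxy, X_pow_eq_monomial, X_pow_eq_monomial,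
    coeff_C_mul, coeff_C_mul, coeff_C_mul, coeff_monomial, coeff_monomial, coeff_monomial]
  by_cases hd : d.degree = 2
  · rcases fin2_cases d hd with rfl | rfl | rfl
    · have h1 : Finsupp.single 0 1 + Finsupp.single 1 1 ≠ (Finsupp.single 0 2 : Fin 2 →₀ ℕ) := by
        intro h; have := DFunLike.congr_fun h 1; simp [Finsupp.single_apply] at this
      have h2 : Finsupp.single 1 2 ≠ (Finsupp.single 0 2 : Fin 2 →₀ ℕ) := by
        intro h; have := DFunLike.congr_fun h 1; simp [Finsupp.single_apply] at this
      simp [h1, h2]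
    · have h1 : Finsupp.single 0 2 ≠ (Finsupp.single 0 1 + Finsupp.single 1 1 : Fin 2 →₀ ℕ) := by
        intro h; have := DFunLike.congr_fun h 1; simp [Finsupp.single_apply] at this
      have h2 : Finsupp.single 1 2 ≠ (Finsupp.single 0 1 + Finsupp.single 1 1 : Fin 2 →₀ ℕ) := by
        intro h; have := DFunLike.congr_fun h 0; simp [Finsupp.single_apply] at this
      simp [h1, h2]
    · have h1 : Finsupp.single 0 2 ≠ (Finsupp.single 1 2 : Fin 2 →₀ ℕ) := by
        intro h; have := DFunLike.congr_fun h 0; simp [Finsupp.single_apply] at this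
      have h2 : Finsupp.single 0 1 + Finsupp.single 1 1 ≠ (Finsupp.single 1 2 : Fin 2 →₀ ℕ) := by
        intro h; have := DFunLike.congr_fun h 0; simp [Finsupp.single_apply] at this
      simp [h1, h2]
  · rw [hP.coeff_eq_zero hd]
    have h1 : Finsupp.single 0 2 ≠ d := by
      rintro rfl; apply hd; rw [fin2_degree]; simp [Finsupp.single_apply]
    have h2 : Finsupp.single 0 1 + Finsupp.single 1 1 ≠ d := by
      rintro rfl; apply hd; rw [fin2_degree]; simp [Finsupp.single_apply]
    have h3 : Finsupp.single 1 2 ≠ d := by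
      rintro rfl; apply hd; rw [fin2_degree]; simp [Finsupp.single_apply]
    simp [h1, h2, h3]


section
variable {F : Type*} [Field F] {P : MvPolynomial (Fin 2) F}

lemma eval_zero_not_unit {p : MvPolynomial (Fin 2) F}
    (hp : eval (fun _ => (0:F)) p = 0) : ¬ IsUnit p := by
  intro h
  have := h.map (eval (fun _ => (0:F)))
  rw [hp] at this
  exact not_isUnit_zero this

lemma coeff_a_ne_zero (hP : P.IsHomogeneous 2) (hPirr : Irreducible P) :
    coeff (Finsupp.single 0 2) P ≠ 0 := by
  intro ha
  set b := coeff (Finsupp.single 0 1 + Finsupp.single 1 1) P with hb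
  set c := coeff (Finsupp.single 1 2) P with hc
  have hd := homog2_decomp' hP
  rw [ha, ← hb, ← hc, map_zero, zero_mul, zero_add] at hd
  have hfact : P = X 1 * (C b * X 0 + C c * X 1) := by rw [hd]; ring
  rcases hPirr.2 hfact with h | h
  · exact eval_zero_not_unit (by simp) h
  · exact eval_zero_not_unit (by simp) h

lemma coeff_c_ne_zero (hP : P.IsHomogeneous 2) (hPirr : Irreducible P) :
    coeff (Finsupp.single 1 2) P ≠ 0 := by
  intro hc
  set a := coeff (Finsupp.single 0 2) P with ha
  set b := coeff (Finsupp.single 0 1 + Finsupp.single 1 1) P with hb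
  have hd := homog2_decomp' hP
  rw [hc, ← ha, ← hb, map_zero, zero_mul, add_zero] at hd
  have hfact : P = X 0 * (C a * X 0 + C b * X 1) := by rw [hd]; ring
  rcases hPirr.2 hfact with h | h
  · exact eval_zero_not_unit (by simp) h
  · exact eval_zero_not_unit (by simp) h

lemma no_root_s8 (hP : P.IsHomogeneous 2) (hPirr : Irreducible P) (r : F)
    (hr : coeff (Finsupp.single 0 2) P
        + coeff (Finsupp.single 0 1 + Finsupp.single 1 1) P * r
        + coeff (Finsupp.single 1 2) P * r ^ 2 = 0) : False := by
  set a := coeff (Finsupp.single 0 2) P with ha'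
  set b := coeff (Finsupp.single 0 1 + Finsupp.single 1 1) P with hb'
  set c := coeff (Finsupp.single 1 2) P with hc'
  have hd := homog2_decomp' hP
  rw [← ha', ← hb', ← hc'] at hd
  have ha : a = -(b * r + c * r ^ 2) := by linear_combination hr
  have hfact : P = (X 1 - C r * X 0) * (C c * X 1 + (C c * C r + C b) * X 0) := by
    rw [hd, ha]
    simp only [map_neg, map_add, map_mul, map_pow]
    ring
  rcases hPirr.2 hfact with h | h
  · exact eval_zero_not_unit (by simp) h
  · exact eval_zero_not_unit (by simp) h

open Polynomial in
lemma Q_irred (hP : P.IsHomogeneous 2) (hPirr : Irreducible P) :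
    Irreducible (Polynomial.C (coeff (Finsupp.single 1 2) P) * Polynomial.X ^ 2
      + Polynomial.C (coeff (Finsupp.single 0 1 + Finsupp.single 1 1) P) * Polynomial.X
      + Polynomial.C (coeff (Finsupp.single 0 2) P)) := by
  set a := coeff (Finsupp.single 0 2) P
  set b := coeff (Finsupp.single 0 1 + Finsupp.single 1 1) P
  set c := coeff (Finsupp.single 1 2) P
  have hc : c ≠ 0 := coeff_c_ne_zero hP hPirr
  have hdeg : (Polynomial.C c * Polynomial.X ^ 2 + Polynomial.C b * Polynomial.X
      + Polynomial.C a).natDegree = 2 := Polynomial.natDegree_quadratic hc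
  rw [Polynomial.irreducible_iff_roots_eq_zero_of_degree_le_three (by omega) (by omega)]
  by_contra hroots
  obtain ⟨r, hr⟩ := Multiset.exists_mem_of_ne_zero hroots
  have hne : (Polynomial.C c * Polynomial.X ^ 2 + Polynomial.C b * Polynomial.X
      + Polynomial.C a) ≠ 0 := by
    intro h0; rw [h0] at hdeg; simp at hdeg
  rw [Polynomial.mem_roots hne, Polynomial.IsRoot] at hr
  simp only [Polynomial.eval_add, Polynomial.eval_mul, Polynomial.eval_pow,
    Polynomial.eval_C, Polynomial.eval_X] at hr
  apply no_root_s8 hP hPirr r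
  show a + b * r + c * r ^ 2 = 0
  linear_combination hr
end

set_option synthInstance.maxHeartbeats 400000
set_option maxHeartbeats 1000000

/-- The class group of `R = 𝔽_q[X,Y]/(P(X,Y) − Y)`, with `P` an irreducible quadratic form
and `q` odd, contains an element of order 2; in particular it has even order. -/
theorem classGroup_has_order_two_element (F : Type*) [Field F] [Fintype F]
    (hF : Odd (Fintype.card F))
    (P : MvPolynomial (Fin 2) F) (hP : P.IsHomogeneous 2) (hPirr : Irreducible P)
    [IsDomain (MvPolynomial (Fin 2) F ⧸ Ideal.span {P - X 1})]
    [IsDedekindDomain (MvPolynomial (Fin 2) F ⧸ Ideal.span {P - X 1})] :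
    (∃ c : ClassGroup (MvPolynomial (Fin 2) F ⧸ Ideal.span {P - X 1}),
        c ≠ 1 ∧ c ^ 2 = 1) ∧
      Even (Nat.card (ClassGroup (MvPolynomial (Fin 2) F ⧸ Ideal.span {P - X 1}))) := by
  classical
  set a := coeff (Finsupp.single 0 2) P with ha'
  set b := coeff (Finsupp.single 0 1 + Finsupp.single 1 1) P with hb'
  set c := coeff (Finsupp.single 1 2) P with hc'
  have hanz : a ≠ 0 := coeff_a_ne_zero hP hPirr
  have hcnz : c ≠ 0 := coeff_c_ne_zero hP hPirr
  set Q : Polynomial F := Polynomial.C c * Polynomial.X ^ 2 + Polynomial.C b * Polynomial.X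
    + Polynomial.C a with hQdef
  have hQirr : Irreducible Q := Q_irred hP hPirr
  have hQ0 : Q ≠ 0 := hQirr.ne_zero
  have hQprime : Prime Q := hQirr.prime
  have hQdeg : Q.natDegree = 2 := Polynomial.natDegree_quadratic hcnz
  have hQt : ¬ Q ∣ Polynomial.X := by
    intro hdvd
    have := Polynomial.natDegree_le_of_dvd hdvd Polynomial.X_ne_zero
    rw [hQdeg, Polynomial.natDegree_X] at this
    omega
  clear_value a b c Q
  have hpoly : Polynomial.C a * Polynomial.X ^ 2
      + Polynomial.C b * (Polynomial.X * Polynomial.X ^ 2)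
      + Polynomial.C c * (Polynomial.X ^ 2) ^ 2 = Polynomial.X ^ 2 * Q := by
    rw [hQdef]; ring
  -- the localization
  have hle : Submonoid.powers Q ≤ nonZeroDivisors (Polynomial F) :=
    powers_le_nonZeroDivisors_of_noZeroDivisors hQ0
  haveI : IsDomain (Localization.Away Q) := IsLocalization.isDomain_localization hle
  set L := Localization.Away Q with hLdef
  set algQ : Polynomial F →+* L := algebraMap (Polynomial F) L with halgQ
  have hinj : Function.Injective algQ := IsLocalization.injective L hle
  set w : L := IsLocalization.Away.invSelf Q with hwdef
  have hw : algQ Q * w = 1 := IsLocalization.Away.mul_invSelf Q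
  set ξ : L := algQ Polynomial.X * w with hξdef
  set η : L := algQ (Polynomial.X ^ 2) * w with hηdef
  have hξQ : ξ * algQ Q = algQ Polynomial.X := by
    rw [show ξ * algQ Q = algQ Polynomial.X * (algQ Q * w) from by rw [hξdef]; ring, hw, mul_one]
  have hηQ : η * algQ Q = algQ (Polynomial.X ^ 2) := by
    rw [show η * algQ Q = algQ (Polynomial.X ^ 2) * (algQ Q * w) from by rw [hηdef]; ring,
      hw, mul_one]
  set φ₀ : MvPolynomial (Fin 2) F →+* L := eval₂Hom (algQ.comp Polynomial.C) ![ξ, η] with hφ₀def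
  have hφ₀X0 : φ₀ (X 0) = ξ := by simp [hφ₀def]
  have hφ₀X1 : φ₀ (X 1) = η := by simp [hφ₀def]
  have hφ₀C : ∀ k : F, φ₀ (C k) = algQ (Polynomial.C k) := by intro k; simp [hφ₀def]
  have hQunit : IsUnit (algQ Q) := IsUnit.of_mul_eq_one _ hw
  -- φ₀ kills P - X 1
  have hφP : φ₀ (P - X 1) = 0 := by
    have hd := homog2_decomp' hP
    rw [← ha', ← hb', ← hc'] at hd
    have hval : φ₀ (P - X 1) = algQ (Polynomial.C a) * ξ ^ 2 + algQ (Polynomial.C b) * (ξ * η)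
        + algQ (Polynomial.C c) * η ^ 2 - η := by
      rw [map_sub, hd]
      simp only [map_add, map_mul, map_pow, hφ₀X0, hφ₀X1, hφ₀C]
    have hzero : φ₀ (P - X 1) * (algQ Q * algQ Q) = 0 := by
      rw [hval]
      have e1 : (algQ (Polynomial.C a) * ξ ^ 2 + algQ (Polynomial.C b) * (ξ * η)
          + algQ (Polynomial.C c) * η ^ 2 - η) * (algQ Q * algQ Q)
          = algQ (Polynomial.C a) * (ξ * algQ Q) ^ 2
            + algQ (Polynomial.C b) * ((ξ * algQ Q) * (η * algQ Q))
            + algQ (Polynomial.C c) * (η * algQ Q) ^ 2 - (η * algQ Q) * algQ Q := by ring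
      rw [e1, hξQ, hηQ]
      have e2 : algQ (Polynomial.C a) * algQ Polynomial.X ^ 2
          + algQ (Polynomial.C b) * (algQ Polynomial.X * algQ (Polynomial.X ^ 2))
          + algQ (Polynomial.C c) * algQ (Polynomial.X ^ 2) ^ 2
          - algQ (Polynomial.X ^ 2) * algQ Q
          = algQ (Polynomial.C a * Polynomial.X ^ 2
              + Polynomial.C b * (Polynomial.X * Polynomial.X ^ 2)
              + Polynomial.C c * (Polynomial.X ^ 2) ^ 2 - Polynomial.X ^ 2 * Q) := by
        simp only [map_sub, map_add, map_mul, map_pow]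
      rw [e2, hpoly, sub_self, map_zero]
    rcases mul_eq_zero.mp hzero with h | h
    · exact h
    · exact absurd h (hQunit.mul hQunit).ne_zero
  -- the induced map on the quotient
  have hvan : ∀ q ∈ Ideal.span {P - X 1}, φ₀ q = 0 := by
    intro q hq
    rw [Ideal.mem_span_singleton] at hq
    obtain ⟨d, rfl⟩ := hq
    rw [map_mul, hφP, zero_mul]
  set φ : (MvPolynomial (Fin 2) F ⧸ Ideal.span {P - X 1}) →+* L :=
    Ideal.Quotient.lift _ φ₀ hvan with hφdef
  set mk : MvPolynomial (Fin 2) F →+* (MvPolynomial (Fin 2) F ⧸ Ideal.span {P - X 1}) :=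
    Ideal.Quotient.mk (Ideal.span {P - X 1}) with hmkdef
  have hφmk : ∀ p, φ (mk p) = φ₀ p := fun p => Ideal.Quotient.lift_mk _ _ _
  -- membership property
  set Memb : L → Prop := fun z => ∃ (f : Polynomial F) (n : ℕ),
    f.natDegree ≤ 2 * n ∧ z * (algQ Q) ^ n = algQ f with hMembdef
  have hMembAll : ∀ p : MvPolynomial (Fin 2) F, Memb (φ₀ p) := by
    intro p
    induction p using MvPolynomial.induction_on with
    | C k =>
      exact ⟨Polynomial.C k, 0, by simp, by rw [pow_zero, mul_one, hφ₀C]⟩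
    | add p q hp hq =>
      obtain ⟨f, n, hfn, hf⟩ := hp
      obtain ⟨g, m, hgm, hg⟩ := hq
      refine ⟨f * Q ^ m + g * Q ^ n, n + m, ?_, ?_⟩
      · apply le_trans (Polynomial.natDegree_add_le _ _)
        have h1 : (f * Q ^ m).natDegree ≤ 2 * (n + m) := by
          apply le_trans (Polynomial.natDegree_mul_le)
          have := Polynomial.natDegree_pow_le (p := Q) (n := m)
          rw [hQdeg] at this
          omega
        have h2 : (g * Q ^ n).natDegree ≤ 2 * (n + m) := by
          apply le_trans (Polynomial.natDegree_mul_le)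
          have := Polynomial.natDegree_pow_le (p := Q) (n := n)
          rw [hQdeg] at this
          omega
        omega
      · have e3 : algQ (f * Q ^ m + g * Q ^ n)
            = algQ f * algQ Q ^ m + algQ g * algQ Q ^ n := by
          simp only [map_add, map_mul, map_pow]
        rw [e3, map_add, show (φ₀ p + φ₀ q) * algQ Q ^ (n + m)
          = (φ₀ p * algQ Q ^ n) * algQ Q ^ m + (φ₀ q * algQ Q ^ m) * algQ Q ^ n from by
            rw [pow_add]; ring, hf, hg]
    | mul_X p i hp =>
      obtain ⟨f, n, hfn, hf⟩ := hp
      fin_cases i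
      · show Memb (φ₀ (p * X 0))
        refine ⟨f * Polynomial.X, n + 1, ?_, ?_⟩
        · apply le_trans (Polynomial.natDegree_mul_le)
          have := Polynomial.natDegree_X_le (R := F)
          omega
        · have e3 : algQ (f * Polynomial.X) = algQ f * algQ Polynomial.X := map_mul _ _ _
          rw [e3, map_mul, hφ₀X0, show φ₀ p * ξ * algQ Q ^ (n + 1)
            = (φ₀ p * algQ Q ^ n) * (ξ * algQ Q) from by rw [pow_succ]; ring,
            hf, hξQ]
      · show Memb (φ₀ (p * X 1))
        refine ⟨f * Polynomial.X ^ 2, n + 1, ?_, ?_⟩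
        · apply le_trans (Polynomial.natDegree_mul_le)
          have := Polynomial.natDegree_pow_le (p := (Polynomial.X : Polynomial F)) (n := 2)
          have hx := Polynomial.natDegree_X_le (R := F)
          have : (Polynomial.X ^ 2 : Polynomial F).natDegree ≤ 2 := by
            apply le_trans (Polynomial.natDegree_pow_le)
            omega
          omega
        · have e3 : algQ (f * Polynomial.X ^ 2) = algQ f * algQ (Polynomial.X ^ 2) :=
            map_mul _ _ _
          rw [e3, map_mul, hφ₀X1, show φ₀ p * η * algQ Q ^ (n + 1)
            = (φ₀ p * algQ Q ^ n) * (η * algQ Q) from by rw [pow_succ]; ring,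
            hf, hηQ]
  have hMembR : ∀ r, Memb (φ r) := by
    intro r
    obtain ⟨p, rfl⟩ := Ideal.Quotient.mk_surjective r
    rw [show Ideal.Quotient.mk (Ideal.span {P - X 1}) p = mk p from rfl, hφmk]
    exact hMembAll p
  -- the elements x, y of the quotient ring
  set x := mk (X 0) with hxdef
  set y := mk (X 1) with hydef
  have hφx : φ x = ξ := by rw [hxdef, hφmk, hφ₀X0]
  have hφy : φ y = η := by rw [hydef, hφmk, hφ₀X1]
  have hy0 : y ≠ 0 := by
    intro h
    have h1 : η = 0 := by rw [← hφy, h, map_zero]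
    have h2 : algQ (Polynomial.X ^ 2) = 0 := by rw [← hηQ, h1, zero_mul]
    have h3 : (Polynomial.X ^ 2 : Polynomial F) = 0 := by
      apply hinj; rw [h2, map_zero]
    exact pow_ne_zero 2 (Polynomial.X_ne_zero) h3
  -- the relation y = A x² + B x y + C y²
  have hrel : y = mk (C a) * (x * x) + mk (C b) * (x * y) + mk (C c) * (y * y) := by
    have hmkP : mk P = y := by
      rw [hmkdef, hydef, Ideal.Quotient.mk_eq_mk_iff_sub_mem]
      exact Ideal.subset_span rfl
    have hd := homog2_decomp' hP
    rw [← ha', ← hb', ← hc'] at hd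
    have h5 : mk (C a * X 0 ^ 2 + C b * (X 0 * X 1) + C c * X 1 ^ 2) = y := by
      rw [← hd]; exact hmkP
    conv_lhs => rw [← h5]
    simp only [map_add, map_mul, map_pow]
    rw [← hxdef, ← hydef]
    ring
  -- the ideal I = (x, y)
  set I : Ideal (MvPolynomial (Fin 2) F ⧸ Ideal.span {P - X 1}) := Ideal.span {x, y} with hIdef
  have hyI : y ∈ I := Ideal.subset_span (by simp)
  have hI0 : I ≠ 0 := by
    intro h
    rw [h] at hyI
    exact hy0 (Ideal.mem_bot.mp hyI)
  -- A = mk (C a) is a unit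
  have hAunit : IsUnit (mk (C a)) := by
    have : IsUnit (C a : MvPolynomial (Fin 2) F) := (Ne.isUnit hanz).map C
    exact this.map mk
  obtain ⟨A', hA'⟩ := hAunit.exists_left_inv
  have hII : I * I = Ideal.span {y} := by
    rw [hIdef, Ideal.span_pair_mul_span_pair]
    apply le_antisymm
    · rw [Ideal.span_le]
      rintro z hz
      simp only [Set.mem_insert_iff, Set.mem_singleton_iff] at hz
      rcases hz with rfl | rfl | rfl | rfl
      · rw [SetLike.mem_coe, Ideal.mem_span_singleton]
        refine ⟨A' * (1 - mk (C b) * x - mk (C c) * y), ?_⟩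
        linear_combination (-A') * hrel - (x * x) * hA'
      · exact SetLike.mem_coe.mpr (Ideal.mem_span_singleton.mpr ⟨x, by ring⟩)
      · exact SetLike.mem_coe.mpr (Ideal.mem_span_singleton.mpr ⟨x, by ring⟩)
      · exact SetLike.mem_coe.mpr (Ideal.mem_span_singleton.mpr ⟨y, by ring⟩)
    · rw [Ideal.span_le, Set.singleton_subset_iff, SetLike.mem_coe]
      set S := Ideal.span ({x * x, x * y, y * x, y * y} :
        Set (MvPolynomial (Fin 2) F ⧸ Ideal.span {P - X 1})) with hSdef
      rw [hrel]
      have h1 : x * x ∈ ({x * x, x * y, y * x, y * y} : Set _) := by simp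
      have h2 : x * y ∈ ({x * x, x * y, y * x, y * y} : Set _) := by simp
      have h3 : y * y ∈ ({x * x, x * y, y * x, y * y} : Set _) := by simp
      exact Ideal.add_mem _ (Ideal.add_mem _
        (Ideal.mul_mem_left _ _ (Ideal.subset_span h1))
        (Ideal.mul_mem_left _ _ (Ideal.subset_span h2)))
        (Ideal.mul_mem_left _ _ (Ideal.subset_span h3))
  have hImem : I ∈ nonZeroDivisors (Ideal (MvPolynomial (Fin 2) F ⧸ Ideal.span {P - X 1})) :=
    mem_nonZeroDivisors_iff_ne_zero.mpr hI0
  set cl := ClassGroup.mk0 ⟨I, hImem⟩ with hcldef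
  have hcl2 : cl ^ 2 = 1 := by
    rw [hcldef, ← map_pow, ClassGroup.mk0_eq_one_iff]
    exact ⟨⟨y, by rw [SubmonoidClass.coe_pow, pow_two, hII, Ideal.submodule_span_eq]⟩⟩
  have hcl1 : cl ≠ 1 := by
    intro h
    rw [hcldef, ClassGroup.mk0_eq_one_iff] at h
    obtain ⟨⟨g, hg⟩⟩ := h
    rw [Ideal.submodule_span_eq] at hg
    rw [hg, Ideal.span_singleton_mul_span_singleton] at hII
    obtain ⟨u, hu⟩ := Ideal.span_singleton_eq_span_singleton.mp hII
    -- hu : g * g * u = y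
    obtain ⟨f, n, hfn, hf⟩ := hMembR g
    obtain ⟨h1, m, hhm, hh⟩ := hMembR ((u : _))
    obtain ⟨h2, m', hhm', hh'⟩ := hMembR ((u⁻¹ : _))
    have hu1 : φ (u : _) * φ ((u⁻¹ : _) : _) = 1 := by
      rw [← map_mul, Units.mul_inv, map_one]
    -- equation (i): h1 * h2 = Q ^ (m + m')
    have hi : h1 * h2 = Q ^ (m + m') := by
      apply hinj
      have e4 : algQ (h1 * h2) = algQ h1 * algQ h2 := map_mul _ _ _
      have e5 : algQ (Q ^ (m + m')) = algQ Q ^ (m + m') := map_pow _ _ _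
      rw [e4, e5, ← hh, ← hh']
      rw [show φ ↑u * algQ Q ^ m * (φ ↑u⁻¹ * algQ Q ^ m')
        = (φ ↑u * φ ↑u⁻¹) * algQ Q ^ (m + m') from by rw [pow_add]; ring, hu1, one_mul]
    -- equation (ii): f * f * h1 * Q = X^2 * Q^(2n + m)
    have hii : f * f * h1 * Q = Polynomial.X ^ 2 * Q ^ (2 * n + m) := by
      apply hinj
      have hφgu : φ g * φ g * φ (u : _) = η := by
        rw [← map_mul, ← map_mul, hu, hφy]
      have e4 : algQ (f * f * h1 * Q) = (algQ f) * (algQ f) * (algQ h1) * algQ Q := by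
        simp only [map_mul]
      have e5 : algQ (Polynomial.X ^ 2 * Q ^ (2 * n + m))
          = algQ (Polynomial.X ^ 2) * algQ Q ^ (2 * n + m) := by
        simp only [map_mul, map_pow]
      rw [e4, e5, ← hf, ← hh]
      rw [show φ g * algQ Q ^ n * (φ g * algQ Q ^ n) * (φ ↑u * algQ Q ^ m) * algQ Q
        = (φ g * φ g * φ ↑u) * algQ Q ^ (2 * n + m) * algQ Q from by
          rw [show 2 * n + m = n + n + m from by omega, pow_add, pow_add]; ring, hφgu]
      rw [← hηQ]
      ring
    -- h1 is associated to Q^j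
    have hdvd : h1 ∣ Q ^ (m + m') := ⟨h2, hi.symm⟩
    obtain ⟨j, hjle, hassoc⟩ := (dvd_prime_pow hQprime (m + m')).mp hdvd
    obtain ⟨v, hv⟩ := hassoc
    -- h1, h2 nonzero
    have hφu_ne : φ (u : _) ≠ 0 := by
      intro h0
      rw [h0, zero_mul] at hu1
      exact zero_ne_one hu1
    have hh1ne : h1 ≠ 0 := by
      rintro rfl
      rw [map_zero] at hh
      exact hφu_ne ((hQunit.pow m).mul_left_eq_zero.mp hh)
    have hh2ne : h2 ≠ 0 := by
      rintro rfl
      rw [mul_zero] at hi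
      exact (pow_ne_zero (m + m') hQ0) hi.symm
    have hvne : (v : Polynomial F) ≠ 0 := Units.ne_zero v
    -- degree computations
    have hdegh1 : h1.natDegree = 2 * j := by
      have := congrArg Polynomial.natDegree hv
      rw [Polynomial.natDegree_mul hh1ne hvne,
        Polynomial.natDegree_eq_zero_of_isUnit v.isUnit, add_zero] at this
      rw [this, Polynomial.natDegree_pow'
        (pow_ne_zero j (Polynomial.leadingCoeff_ne_zero.mpr hQ0)), hQdeg]
      ring
    have hjm : j ≤ m := by
      rw [hdegh1] at hhm
      omega
    have hdegh2 : h2.natDegree = 2 * (m + m') - 2 * j := by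
      have heq : Q ^ j * h2 = (v : Polynomial F) * Q ^ (m + m') := by
        have : h1 * (v : Polynomial F) * h2 = (v : Polynomial F) * (h1 * h2) := by ring
        rw [hv, hi] at this
        linear_combination this
      have := congrArg Polynomial.natDegree heq
      rw [Polynomial.natDegree_mul (pow_ne_zero j hQ0) hh2ne,
        Polynomial.natDegree_mul hvne (pow_ne_zero (m + m') hQ0),
        Polynomial.natDegree_eq_zero_of_isUnit v.isUnit, zero_add,
        Polynomial.natDegree_pow' (pow_ne_zero j (Polynomial.leadingCoeff_ne_zero.mpr hQ0)),
        Polynomial.natDegree_pow'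
          (pow_ne_zero (m + m') (Polynomial.leadingCoeff_ne_zero.mpr hQ0)), hQdeg] at this
      omega
    have hmj : m ≤ j := by
      rw [hdegh2] at hhm'
      omega
    have hjem : j = m := le_antisymm hjm hmj
    -- final equation and parity contradiction
    have hfinal : (↑v⁻¹ : Polynomial F) * f ^ 2 * Q = Polynomial.X ^ 2 * Q ^ (2 * n) := by
      have hcancel : (f * f * Q) * Q ^ m = ((v : Polynomial F) * (Polynomial.X ^ 2 * Q ^ (2 * n))) * Q ^ m := by
        have hstep : (v : Polynomial F) * (f * f * h1 * Q) = f * f * Q ^ m * Q := by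
          rw [show (v : Polynomial F) * (f * f * h1 * Q) = f * f * (h1 * v) * Q from by ring,
            hv, hjem]
        rw [show ((v:Polynomial F) * (Polynomial.X ^ 2 * Q ^ (2 * n))) * Q ^ m
          = (v:Polynomial F) * (Polynomial.X ^ 2 * Q ^ (2 * n + m)) from by rw [pow_add]; ring,
          ← hii, hstep]
        ring
      have h5 : f * f * Q = (v : Polynomial F) * (Polynomial.X ^ 2 * Q ^ (2 * n)) :=
        mul_right_cancel₀ (pow_ne_zero m hQ0) hcancel
      have h6 : (↑v⁻¹ : Polynomial F) * ((v : Polynomial F)) = 1 := by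
        exact_mod_cast Units.inv_mul v
      calc (↑v⁻¹ : Polynomial F) * f ^ 2 * Q = (↑v⁻¹ : Polynomial F) * (f * f * Q) := by ring
        _ = ((↑v⁻¹ : Polynomial F) * (v : Polynomial F)) * (Polynomial.X ^ 2 * Q ^ (2 * n)) := by
            rw [h5]; ring
        _ = Polynomial.X ^ 2 * Q ^ (2 * n) := by rw [h6, one_mul]
    exact key_parity' hQprime hQt n f _ (v⁻¹).isUnit hfinal
  refine ⟨⟨cl, hcl1, hcl2⟩, ?_⟩
  have hord : orderOf cl = 2 := orderOf_eq_prime hcl2 hcl1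
  have hdvd := orderOf_dvd_natCard cl
  rw [hord] at hdvd
  exact even_iff_two_dvd.mpr hdvd
end

section
/- In the ring R = 𝔽_q[X,Y]/(Y² − X³ + X), the square of the ideal I = (x,y) equals the principal ideal generated by x: I² = (x). (This is the affine expression of the divisor identity div(x) = 2(P₀ − P∞) on the projective curve y²z − x(x² − z²) = 0, where P₀ is the origin.) -/
open MvPolynomial

set_option maxHeartbeats 1000000
set_option synthInstance.maxHeartbeats 400000

/-- In `R = 𝔽_q[X,Y]/(Y² − X³ + X)` with `q` odd, the square of the ideal `I = (x, y)`
is the principal ideal `(x)`. -/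
theorem ideal_sq_eq_span_x (F : Type*) [Field F] [Fintype F] (hF : Odd (Fintype.card F)) :
    (Ideal.span {Ideal.Quotient.mk (Ideal.span {(X 1 ^ 2 - X 0 ^ 3 + X 0 : MvPolynomial (Fin 2) F)}) (X 0),
        Ideal.Quotient.mk (Ideal.span {(X 1 ^ 2 - X 0 ^ 3 + X 0 : MvPolynomial (Fin 2) F)}) (X 1)}) ^ 2 =
      Ideal.span {Ideal.Quotient.mk (Ideal.span {(X 1 ^ 2 - X 0 ^ 3 + X 0 : MvPolynomial (Fin 2) F)}) (X 0)} := by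
  set f := Ideal.Quotient.mk (Ideal.span {(X 1 ^ 2 - X 0 ^ 3 + X 0 : MvPolynomial (Fin 2) F)}) with hf
  set a := f (X 0) with ha
  set b := f (X 1) with hb
  have hrel : b * b = a * a * a - a := by
    rw [ha, hb, hf, ← map_mul, ← map_mul, ← map_mul, ← map_sub, Ideal.Quotient.eq,
      Ideal.mem_span_singleton]
    exact ⟨1, by ring⟩
  have hx : a = a * (a * a) - b * b := by rw [hrel]; ring
  rw [pow_two (Ideal.span {a, b})]
  rw [Ideal.span_insert]
  rw [Ideal.sup_mul, Ideal.mul_sup, Ideal.mul_sup]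
  rw [Ideal.span_singleton_mul_span_singleton, Ideal.span_singleton_mul_span_singleton,
    Ideal.span_singleton_mul_span_singleton, Ideal.span_singleton_mul_span_singleton]
  apply le_antisymm
  · refine sup_le (sup_le ?_ ?_) (sup_le ?_ ?_) <;>
      rw [Ideal.span_singleton_le_span_singleton]
    · exact ⟨a, rfl⟩
    · exact ⟨b, rfl⟩
    · exact Dvd.intro_left b rfl
    · exact ⟨a * a - 1, by rw [hrel]; ring⟩
  · rw [Ideal.span_le, Set.singleton_subset_iff]
    have h1 : a * (a * a) ∈ Ideal.span {a * a} ⊔ Ideal.span {a * b} ⊔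
        (Ideal.span {b * a} ⊔ Ideal.span {b * b}) := by
      apply Ideal.mem_sup_left
      apply Ideal.mem_sup_left
      exact Ideal.mem_span_singleton.mpr (Dvd.intro_left a rfl)
    have h2 : b * b ∈ Ideal.span {a * a} ⊔ Ideal.span {a * b} ⊔
        (Ideal.span {b * a} ⊔ Ideal.span {b * b}) := by
      apply Ideal.mem_sup_right
      apply Ideal.mem_sup_right
      exact Ideal.mem_span_singleton_self _
    have h3 := sub_mem h1 h2
    rwa [← hx] at h3
end

section
/- The ideal class group of R = 𝔽_q[X,Y]/(Y² − X³ + X) contains an element c with c ≠ 1 and c² = 1, i.e., an element of order 2; in particular, being finite, it has even order. -/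
open MvPolynomial

noncomputable section

namespace EllAux

variable (F : Type*) [Field F]

def dd : Polynomial F := Polynomial.X ^ 3 - Polynomial.X

def gg : Polynomial (Polynomial F) := Polynomial.X ^ 2 - Polynomial.C (dd F)

lemma gg_monic : (gg F).Monic := Polynomial.monic_X_pow_sub_C _ two_ne_zero

lemma gg_degree : (gg F).degree = 2 := by
  rw [gg, Polynomial.degree_X_pow_sub_C (by norm_num) (dd F)]; rfl

abbrev A := AdjoinRoot (gg F)

lemma of_inj : Function.Injective (AdjoinRoot.of (gg F)) := by
  intro a b h
  have h2 := congrArg (AdjoinRoot.modByMonicHom (gg_monic F)) h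
  have ha : AdjoinRoot.of (gg F) a = AdjoinRoot.mk (gg F) (Polynomial.C a) := rfl
  have hb : AdjoinRoot.of (gg F) b = AdjoinRoot.mk (gg F) (Polynomial.C b) := rfl
  rw [ha, hb, AdjoinRoot.modByMonicHom_mk, AdjoinRoot.modByMonicHom_mk,
    (Polynomial.modByMonic_eq_self_iff (gg_monic F)).2, 
    (Polynomial.modByMonic_eq_self_iff (gg_monic F)).2] at h2
  · exact Polynomial.C_injective h2
  · exact lt_of_le_of_lt (Polynomial.degree_C_le) (by rw [gg_degree]; norm_num)
  · exact lt_of_le_of_lt (Polynomial.degree_C_le) (by rw [gg_degree]; norm_num)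

lemma root_sq : (AdjoinRoot.root (gg F)) ^ 2 = AdjoinRoot.of (gg F) (dd F) := by
  have h : AdjoinRoot.mk (gg F) (Polynomial.X ^ 2 - Polynomial.C (dd F)) = 0 :=
    AdjoinRoot.mk_self
  rw [map_sub, map_pow, AdjoinRoot.mk_X, sub_eq_zero] at h
  rw [h]; rfl

lemma eval_gg {S : Type*} [CommRing S] (f : Polynomial F →+* S) (x : S)
    (hx : x ^ 2 = f (dd F)) : (gg F).eval₂ f x = 0 := by
  simp only [gg, Polynomial.eval₂_sub, Polynomial.eval₂_pow, Polynomial.eval₂_X,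
    Polynomial.eval₂_C]
  exact sub_eq_zero.2 hx

def σ : A F →+* A F :=
  AdjoinRoot.lift (AdjoinRoot.of (gg F)) (-(AdjoinRoot.root (gg F)))
    (eval_gg F _ _ (by rw [neg_sq]; exact root_sq F))

lemma σ_of (p : Polynomial F) : σ F (AdjoinRoot.of (gg F) p) = AdjoinRoot.of (gg F) p :=
  AdjoinRoot.lift_of _

lemma σ_root : σ F (AdjoinRoot.root (gg F)) = -(AdjoinRoot.root (gg F)) :=
  AdjoinRoot.lift_root _

lemma repr_ab (z : A F) : ∃ a b : Polynomial F,
    z = AdjoinRoot.of (gg F) a + AdjoinRoot.of (gg F) b * AdjoinRoot.root (gg F) := by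
  obtain ⟨p, rfl⟩ := AdjoinRoot.mk_surjective z
  refine ⟨(p %ₘ gg F).coeff 0, (p %ₘ gg F).coeff 1, ?_⟩
  have hmk : AdjoinRoot.mk (gg F) p = AdjoinRoot.mk (gg F) (p %ₘ gg F) := by
    conv_lhs => rw [← Polynomial.modByMonic_add_div p (gg F)]
    rw [map_add, map_mul, AdjoinRoot.mk_self, zero_mul, add_zero]
  have hdeg : (p %ₘ gg F).degree ≤ 1 := by
    have := Polynomial.degree_modByMonic_lt p (gg_monic F)
    rw [gg_degree] at this
    exact Order.le_of_lt_succ (by exact_mod_cast this)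
  have hrep := Polynomial.eq_X_add_C_of_degree_le_one hdeg
  rw [hmk]
  conv_lhs => rw [hrep]
  rw [map_add, map_mul]
  have hc : ∀ q : Polynomial F, AdjoinRoot.mk (gg F) (Polynomial.C q) = AdjoinRoot.of (gg F) q :=
    fun q => rfl
  rw [hc, hc, AdjoinRoot.mk_X]
  ring

lemma norm_form (z : A F) : ∃ a b : Polynomial F,
    z * σ F z = AdjoinRoot.of (gg F) (a ^ 2 - b ^ 2 * dd F) := by
  obtain ⟨a, b, rfl⟩ := repr_ab F z
  refine ⟨a, b, ?_⟩
  rw [map_add, map_mul, σ_of, σ_of, σ_root]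
  have : (AdjoinRoot.of (gg F) a + AdjoinRoot.of (gg F) b * AdjoinRoot.root (gg F)) *
      (AdjoinRoot.of (gg F) a + AdjoinRoot.of (gg F) b * -AdjoinRoot.root (gg F)) =
      (AdjoinRoot.of (gg F) a) ^ 2 -
        (AdjoinRoot.of (gg F) b) ^ 2 * (AdjoinRoot.root (gg F)) ^ 2 := by ring
  rw [this, root_sq, map_sub, map_mul, map_pow, map_pow]


lemma dd_natDegree : (dd F).natDegree = 3 := by
  rw [dd, Polynomial.natDegree_sub_eq_left_of_natDegree_lt] <;>
    simp [Polynomial.natDegree_X_pow]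

lemma dd_ne_zero : (dd F) ≠ 0 := fun h => by
  have := dd_natDegree F
  rw [h] at this
  simp at this

lemma key (z u : A F) (hu : IsUnit u) :
    AdjoinRoot.of (gg F) Polynomial.X ≠ z ^ 2 * u := by
  intro heq
  obtain ⟨v, hv⟩ := hu
  obtain ⟨a, b, hz⟩ := norm_form F z
  obtain ⟨c, hc⟩ : ∃ c, u * σ F u = AdjoinRoot.of (gg F) c := by
    obtain ⟨a, b, h⟩ := norm_form F u; exact ⟨_, h⟩
  obtain ⟨m, hm⟩ : ∃ m, (↑v⁻¹ : A F) * σ F (↑v⁻¹ : A F) = AdjoinRoot.of (gg F) m := by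
    obtain ⟨a, b, h⟩ := norm_form F _; exact ⟨_, h⟩
  have hcm : c * m = 1 := by
    apply of_inj F
    rw [map_mul, map_one, ← hc, ← hm, ← hv]
    have hmm : ((v : A F) * σ F (v : A F)) * ((↑v⁻¹ : A F) * σ F (↑v⁻¹ : A F)) =
        ((v : A F) * (↑v⁻¹ : A F)) * σ F ((v : A F) * (↑v⁻¹ : A F)) := by
      rw [map_mul]; ring
    rw [hmm, Units.mul_inv, map_one, mul_one]
  have h2 : (AdjoinRoot.of (gg F) Polynomial.X) ^ 2 = (z * σ F z) ^ 2 * (u * σ F u) := by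
    have hσ := congrArg (σ F) heq
    rw [σ_of, map_mul, map_pow] at hσ
    rw [pow_two]
    nth_rewrite 1 [heq]
    rw [hσ]
    ring
  have hmain : (Polynomial.X : Polynomial F) ^ 2 = (a ^ 2 - b ^ 2 * dd F) ^ 2 * c := by
    apply of_inj F
    rw [map_mul, map_pow, map_pow, h2, hz, hc]
  have hc0 : c ≠ 0 := by
    intro h; rw [h, zero_mul] at hcm; exact zero_ne_one hcm
  have hcdeg : c.natDegree = 0 :=
    Polynomial.natDegree_eq_zero_of_isUnit (IsUnit.of_mul_eq_one m hcm)
  have hs0 : (a ^ 2 - b ^ 2 * dd F) ≠ 0 := by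
    intro h
    rw [h] at hmain
    simp only [zero_pow, zero_mul, pow_eq_zero_iff, ne_eq, OfNat.ofNat_ne_zero,
      not_false_eq_true] at hmain
    exact Polynomial.X_ne_zero hmain
  have hdeg := congrArg Polynomial.natDegree hmain
  rw [Polynomial.natDegree_mul (pow_ne_zero _ hs0) hc0, Polynomial.natDegree_pow,
    Polynomial.natDegree_pow, Polynomial.natDegree_X] at hdeg
  have hsdeg : (a ^ 2 - b ^ 2 * dd F).natDegree = 1 := by omega
  have had : (a ^ 2).natDegree = 2 * a.natDegree := by
    rw [Polynomial.natDegree_pow]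
  by_cases hb : b = 0
  · rw [hb] at hsdeg
    simp only [ne_eq, OfNat.ofNat_ne_zero, not_false_eq_true, zero_pow, zero_mul,
      sub_zero] at hsdeg
    omega
  · have hbd : (b ^ 2 * dd F).natDegree = 2 * b.natDegree + 3 := by
      rw [Polynomial.natDegree_mul (pow_ne_zero _ hb) (dd_ne_zero F),
        Polynomial.natDegree_pow, dd_natDegree]
    rcases lt_trichotomy ((a ^ 2).natDegree) ((b ^ 2 * dd F).natDegree) with h | h | h
    · have := Polynomial.natDegree_sub_eq_right_of_natDegree_lt h
      omega
    · omega
    · have := Polynomial.natDegree_sub_eq_left_of_natDegree_lt h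
      omega

abbrev J : Ideal (MvPolynomial (Fin 2) F) :=
  Ideal.span {(X 1 ^ 2 - X 0 ^ 3 + X 0 : MvPolynomial (Fin 2) F)}

def phi : MvPolynomial (Fin 2) F →+* A F :=
  (MvPolynomial.eval₂Hom ((AdjoinRoot.of (gg F)).comp Polynomial.C)
    (fun i => if i = 0 then AdjoinRoot.of (gg F) Polynomial.X else AdjoinRoot.root (gg F)))

lemma phi_X0 : phi F (X 0) = AdjoinRoot.of (gg F) Polynomial.X := by
  simp [phi]

lemma phi_X1 : phi F (X 1) = AdjoinRoot.root (gg F) := by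
  simp [phi]

lemma phi_rel : phi F (X 1 ^ 2 - X 0 ^ 3 + X 0 : MvPolynomial (Fin 2) F) = 0 := by
  rw [map_add, map_sub, map_pow, map_pow, phi_X0, phi_X1, root_sq]
  rw [← map_pow, ← map_sub, ← map_add]
  have h : dd F - Polynomial.X ^ 3 + Polynomial.X = 0 := by rw [dd]; ring
  rw [h, map_zero]

def e1 : (MvPolynomial (Fin 2) F ⧸ J F) →+* A F :=
  Ideal.Quotient.lift (J F) (phi F) (fun a ha =>
    RingHom.mem_ker.1
      (Ideal.span_le.2 (Set.singleton_subset_iff.2 (RingHom.mem_ker.2 (phi_rel F))) ha))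

lemma e1_x : e1 F (Ideal.Quotient.mk (J F) (X 0)) = AdjoinRoot.of (gg F) Polynomial.X := by
  rw [e1, Ideal.Quotient.lift_mk, phi_X0]

lemma e1_y : e1 F (Ideal.Quotient.mk (J F) (X 1)) = AdjoinRoot.root (gg F) := by
  rw [e1, Ideal.Quotient.lift_mk, phi_X1]

end EllAux

open scoped nonZeroDivisors

set_option synthInstance.maxHeartbeats 400000
set_option maxHeartbeats 1000000

/-- The class group of `R = 𝔽_q[X,Y]/(Y² − X³ + X)` with `q` odd contains an element of
order 2; in particular it has even order. -/
theorem classGroup_has_order_two_element_elliptic (F : Type*) [Field F] [Fintype F]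
    (hF : Odd (Fintype.card F))
    [IsDomain (MvPolynomial (Fin 2) F ⧸ Ideal.span {(X 1 ^ 2 - X 0 ^ 3 + X 0 : MvPolynomial (Fin 2) F)})]
    [IsDedekindDomain (MvPolynomial (Fin 2) F ⧸ Ideal.span {(X 1 ^ 2 - X 0 ^ 3 + X 0 : MvPolynomial (Fin 2) F)})] :
    (∃ c : ClassGroup (MvPolynomial (Fin 2) F ⧸ Ideal.span {(X 1 ^ 2 - X 0 ^ 3 + X 0 : MvPolynomial (Fin 2) F)}),
        c ≠ 1 ∧ c ^ 2 = 1) ∧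
      Even (Nat.card (ClassGroup (MvPolynomial (Fin 2) F ⧸ Ideal.span {(X 1 ^ 2 - X 0 ^ 3 + X 0 : MvPolynomial (Fin 2) F)}))) := by
  classical
  have hrel : Ideal.Quotient.mk (EllAux.J F) (X 1 ^ 2 - X 0 ^ 3 + X 0 : MvPolynomial (Fin 2) F) = 0 :=
    Ideal.Quotient.eq_zero_iff_mem.2 (Ideal.subset_span rfl)
  set xx := Ideal.Quotient.mk (EllAux.J F) (X 0 : MvPolynomial (Fin 2) F) with hxxdef
  set yy := Ideal.Quotient.mk (EllAux.J F) (X 1 : MvPolynomial (Fin 2) F) with hyydef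
  have hcurve : yy ^ 2 - xx ^ 3 + xx = 0 := by
    rw [hxxdef, hyydef, ← map_pow, ← map_pow, ← map_sub, ← map_add]
    exact hrel
  have hyx : yy ^ 2 = xx ^ 3 - xx := by linear_combination hcurve
  have hxne : xx ≠ 0 := by
    intro h
    have h2 := congrArg (EllAux.e1 F) h
    rw [map_zero, hxxdef, EllAux.e1_x] at h2
    exact Polynomial.X_ne_zero (EllAux.of_inj F (h2.trans (map_zero _).symm))
  set I : Ideal (MvPolynomial (Fin 2) F ⧸ EllAux.J F) := Ideal.span {xx, yy} with hIdef
  have hxI : xx ∈ I := Ideal.subset_span (by simp)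
  have hyI : yy ∈ I := Ideal.subset_span (by simp)
  have hI2 : I * I = Ideal.span {xx} := by
    apply le_antisymm
    · rw [hIdef, Ideal.span_mul_span']
      rw [Ideal.span_le]
      rintro z hz
      rw [Set.mem_mul] at hz
      obtain ⟨p, hp, r, hr, rfl⟩ := hz
      simp only [Set.mem_insert_iff, Set.mem_singleton_iff] at hp hr
      rw [SetLike.mem_coe, Ideal.mem_span_singleton]
      rcases hp with rfl | rfl <;> rcases hr with rfl | rfl
      · exact Dvd.intro _ rfl
      · exact dvd_mul_right _ _
      · exact dvd_mul_left _ _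
      · exact ⟨xx ^ 2 - 1, by linear_combination hyx⟩
    · rw [Ideal.span_le, Set.singleton_subset_iff]
      have hx3 : xx = xx * (xx * xx) - yy * yy := by linear_combination hyx
      rw [SetLike.mem_coe, hx3]
      exact sub_mem (Ideal.mul_mem_mul hxI (I.mul_mem_left _ hxI))
        (Ideal.mul_mem_mul hyI hyI)
  have hInp : ¬ I.IsPrincipal := by
    rintro ⟨f, hf⟩
    have hspan : Ideal.span {f * f} = Ideal.span {xx} := by
      calc Ideal.span {f * f} = Ideal.span {f} * Ideal.span {f} :=
            (Ideal.span_singleton_mul_span_singleton _ _).symm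
        _ = I * I := by rw [hf]
        _ = Ideal.span {xx} := hI2
    obtain ⟨u, hu⟩ := Ideal.span_singleton_eq_span_singleton.1 hspan
    have h2 := congrArg (EllAux.e1 F) hu
    rw [map_mul, map_mul, hxxdef, EllAux.e1_x] at h2
    refine EllAux.key F (EllAux.e1 F f) (EllAux.e1 F ↑u) (u.isUnit.map _) ?_
    rw [← h2]; ring
  have hI0 : I ∈ (Ideal (MvPolynomial (Fin 2) F ⧸ EllAux.J F))⁰ :=
    mem_nonZeroDivisors_of_ne_zero (by
      intro h
      rw [h] at hxI
      exact hxne ((Submodule.mem_bot _).1 hxI))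
  have hxxmem : Ideal.span {xx} ∈ (Ideal (MvPolynomial (Fin 2) F ⧸ EllAux.J F))⁰ :=
    mem_nonZeroDivisors_of_ne_zero (by
      intro h
      apply hxne
      have hx : xx ∈ Ideal.span {xx} := Ideal.subset_span rfl
      rw [h] at hx
      exact (Submodule.mem_bot _).1 hx)
  set c := ClassGroup.mk0 (⟨I, hI0⟩ : (Ideal (MvPolynomial (Fin 2) F ⧸ EllAux.J F))⁰) with hcdef
  have hc1 : c ≠ 1 := fun h => hInp ((ClassGroup.mk0_eq_one_iff hI0).1 h)
  have hsq : (⟨I, hI0⟩ : (Ideal (MvPolynomial (Fin 2) F ⧸ EllAux.J F))⁰) ^ 2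
      = ⟨Ideal.span {xx}, hxxmem⟩ := by
    apply Subtype.ext
    show I ^ 2 = Ideal.span {xx}
    rw [pow_two, hI2]
  have hc2 : c ^ 2 = 1 := by
    rw [hcdef, ← map_pow, hsq]
    exact (ClassGroup.mk0_eq_one_iff hxxmem).2 ⟨⟨xx, rfl⟩⟩
  refine ⟨⟨c, hc1, hc2⟩, ?_⟩
  have hord : orderOf c = 2 := orderOf_eq_prime hc2 hc1
  obtain ⟨k, hk⟩ := orderOf_dvd_natCard c
  exact even_iff_two_dvd.2 ⟨k, by rw [hk, hord]⟩
end
end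

section
/- If 1 ≤ r < n, then there exists no K-algebra homomorphism from L to the matrix algebra M_r(K). -/
/-- If `L/K` is a field extension of finite degree `n` and `1 ≤ r < n`, then there is no
`K`-algebra homomorphism from `L` to the matrix algebra `M_r(K)`. -/
theorem no_algHom_to_small_matrix (K L : Type*) [Field K] [Field L] [Algebra K L]
    [FiniteDimensional K L] (n r : ℕ) (hn : Module.finrank K L = n)
    (hr : 1 ≤ r) (hrn : r < n) :
    IsEmpty (L →ₐ[K] Matrix (Fin r) (Fin r) K) := by
  constructor
  intro f
  -- turn matrices into endomorphisms of V = Fin r → K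
  set V := Fin r → K with hV
  let g : L →ₐ[K] Module.End K V :=
    (Matrix.toLinAlgEquiv' : Matrix (Fin r) (Fin r) K ≃ₐ[K] Module.End K V).toAlgHom.comp f
  letI : Module L V := Module.compHom V g.toRingHom
  have hsmul : ∀ (l : L) (v : V), l • v = g l v := fun _ _ => rfl
  haveI : IsScalarTower K L V := by
    constructor
    intro k l v
    rw [hsmul, hsmul]
    have : g (k • l) = k • g l := map_smul g.toLinearMap k l
    rw [this, LinearMap.smul_apply]
  haveI : FiniteDimensional L V := FiniteDimensional.right K L V
  have h1 : Module.finrank K L * Module.finrank L V = Module.finrank K V :=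
    Module.finrank_mul_finrank K L V
  have h2 : Module.finrank K V = r := by
    exact Module.finrank_fin_fun K
  haveI : Nontrivial V := by
    have : 0 < r := hr
    exact ⟨(fun _ => 0), (fun _ => 1), fun h => by
      have := congrFun h ⟨0, this⟩
      simp at this⟩
  have h3 : 1 ≤ Module.finrank L V := Module.finrank_pos
  have : n ≤ r := by
    calc n = Module.finrank K L := hn.symm
    _ ≤ Module.finrank K L * Module.finrank L V := Nat.le_mul_of_pos_right _ h3
    _ = r := by rw [h1, h2]
  omega
end

section
/- If x ∈ K^× is an n-th power in E^×, i.e., there exists y ∈ E^× with yⁿ equal to the image of x in E, then x ∈ A^×·(K^×)ⁿ, i.e., x = u·cⁿ for some unit u of A and some c ∈ K^×. -/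
/-- Let `A ⊆ B` be discrete valuation rings with fraction fields `K ⊆ E`, such that some
uniformizer of `A` is also a uniformizer of `B` (an unramified extension). If `x ∈ K^×`
is an `n`-th power in `E^×`, then `x = u · cⁿ` for a unit `u` of `A` and some `c ∈ K^×`. -/
theorem nth_power_descends_unramified (A B K E : Type*)
    [CommRing A] [IsDomain A] [IsDiscreteValuationRing A]
    [CommRing B] [IsDomain B] [IsDiscreteValuationRing B]
    [Algebra A B] (hinj : Function.Injective (algebraMap A B))
    [Field K] [Algebra A K] [IsFractionRing A K]
    [Field E] [Algebra B E] [IsFractionRing B E]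
    [Algebra K E] [Algebra A E] [IsScalarTower A K E] [IsScalarTower A B E]
    (hunram : ∃ π : A, Irreducible π ∧ Irreducible (algebraMap A B π))
    (n : ℕ) (hn : 0 < n) (x : K) (hx : x ≠ 0)
    (hpow : ∃ y : E, y ≠ 0 ∧ y ^ n = algebraMap K E x) :
    ∃ (u : Aˣ) (c : K), c ≠ 0 ∧ x = algebraMap A K u * c ^ n := by
  obtain ⟨π, hπ, hπB⟩ := hunram
  obtain ⟨y, hy0, hy⟩ := hpow
  have hAKinj : Function.Injective (algebraMap A K) := IsFractionRing.injective A K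
  have hBEinj : Function.Injective (algebraMap B E) := IsFractionRing.injective B E
  obtain ⟨a, b, hb, hab⟩ := IsFractionRing.div_surjective (A := A) x
  have hb0 : b ≠ 0 := nonZeroDivisors.ne_zero hb
  have ha0 : a ≠ 0 := by
    rintro rfl
    rw [map_zero, zero_div] at hab
    exact hx hab.symm
  obtain ⟨m, u1, ha⟩ := IsDiscreteValuationRing.eq_unit_mul_pow_irreducible ha0 hπ
  obtain ⟨l, u2, hbb⟩ := IsDiscreteValuationRing.eq_unit_mul_pow_irreducible hb0 hπ
  obtain ⟨c', d', hd', hcd⟩ := IsFractionRing.div_surjective (A := B) y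
  have hd'0 : d' ≠ 0 := nonZeroDivisors.ne_zero hd'
  have hc'0 : c' ≠ 0 := by
    rintro rfl
    rw [map_zero, zero_div] at hcd
    exact hy0 hcd.symm
  obtain ⟨p, v1, hc'⟩ := IsDiscreteValuationRing.eq_unit_mul_pow_irreducible hc'0 hπB
  obtain ⟨q, v2, hd'eq⟩ := IsDiscreteValuationRing.eq_unit_mul_pow_irreducible hd'0 hπB
  have hbE : algebraMap B E (algebraMap A B b) ≠ 0 := fun h =>
    hb0 (hinj (hBEinj (by rw [h, map_zero, map_zero])))
  have hd'E : algebraMap B E d' ≠ 0 := fun h => hd'0 (hBEinj (by rw [h, map_zero]))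
  -- the key equation down in B
  have key : c' ^ n * algebraMap A B b = algebraMap A B a * d' ^ n := by
    apply hBEinj
    have hx' : algebraMap K E x =
        algebraMap B E (algebraMap A B a) / algebraMap B E (algebraMap A B b) := by
      rw [← hab, map_div₀, ← IsScalarTower.algebraMap_apply A K E,
        ← IsScalarTower.algebraMap_apply A K E, IsScalarTower.algebraMap_apply A B E,
        IsScalarTower.algebraMap_apply A B E]
    have hyE : (algebraMap B E c' / algebraMap B E d') ^ n =
        algebraMap B E (algebraMap A B a) / algebraMap B E (algebraMap A B b) := by
      rw [hcd, hy, hx']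
    rw [div_pow, div_eq_div_iff (pow_ne_zero _ hd'E) hbE] at hyE
    rw [map_mul, map_mul, map_pow, map_pow]
    exact hyE
  -- rewrite key as units times powers of the uniformizer of B
  have key2 : ((Units.map (algebraMap A B : A →* B) u2) * v1 ^ n : Bˣ) *
      (algebraMap A B π) ^ (n * p + l) =
      ((Units.map (algebraMap A B : A →* B) u1) * v2 ^ n : Bˣ) *
      (algebraMap A B π) ^ (m + n * q) := by
    have := key
    rw [hc', hd'eq, ha, hbb] at this
    simp only [map_mul, map_pow, Units.val_mul, Units.val_pow_eq_pow_val,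
      Units.coe_map, MonoidHom.coe_coe] at this ⊢
    rw [pow_add, pow_add, pow_mul, pow_mul]
    ring_nf
    ring_nf at this
    linear_combination this
  have hexp : n * p + l = m + n * q :=
    IsDiscreteValuationRing.unit_mul_pow_congr_pow hπB hπB _ _ _ _ key2
  -- now build the answer in K
  set πK : K := algebraMap A K π with hπK
  have hπK0 : πK ≠ 0 := fun h => hπ.ne_zero (hAKinj (by rw [map_zero]; exact h))
  have hu2K : algebraMap A K (u2 : A) ≠ 0 := fun h =>
    u2.ne_zero (hAKinj (by rw [h, map_zero]))
  refine ⟨u1 * u2⁻¹, πK ^ ((p : ℤ) - q), zpow_ne_zero _ hπK0, ?_⟩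
  have hcn : (πK ^ ((p : ℤ) - q)) ^ n = πK ^ (m : ℤ) / πK ^ (l : ℤ) := by
    rw [← zpow_natCast (πK ^ ((p : ℤ) - q)) n, ← zpow_mul, ← zpow_sub₀ hπK0]
    congr 1
    have : (n : ℤ) * p + l = m + n * q := by exact_mod_cast hexp
    ring_nf
    linarith
  have hu2inv : algebraMap A K ((u2⁻¹ : Aˣ) : A) = (algebraMap A K (u2 : A))⁻¹ := by
    exact eq_inv_of_mul_eq_one_left (by rw [← map_mul, Units.inv_mul, map_one])
  rw [← hab, ha, hbb, hcn]
  simp only [map_mul, map_pow, Units.val_mul, hu2inv, zpow_natCast]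
  field_simp
  rw [← hπK, mul_div_assoc, div_self (pow_ne_zero _ hπK0), mul_one]
end
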